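/- arXiv:1612.02210 — 5 statements merged into one kernel-verified Lean document; each statement's English description precedes it below -/
import Mathlib

section
/- Let A be an m-by-n real matrix with m, n ≥ 1 and let r ≥ 1. If every contiguous minor of A of size at most r is positive, then A is totally positive of order r (TP_r). -/
/-- `A` is totally nonnegative of order `r`: every minor of size at most `r` is nonnegative. -/
def IsTNr {m n : ℕ} (A : Matrix (Fin m) (Fin n) ℝ) (r : ℕ) : Prop :=
  ∀ (k : ℕ), k ≤ r → ∀ (f : Fin k → Fin m) (g : Fin k → Fin n),
    StrictMono f → StrictMono g → 0 ≤ (A.submatrix f g).det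

/-- `A` is totally positive of order `r`: every minor of size at most `r` is positive. -/
def IsTPr {m n : ℕ} (A : Matrix (Fin m) (Fin n) ℝ) (r : ℕ) : Prop :=
  ∀ (k : ℕ), k ≤ r → ∀ (f : Fin k → Fin m) (g : Fin k → Fin n),
    StrictMono f → StrictMono g → 0 < (A.submatrix f g).det

/-- The contiguous `k`-by-`k` submatrix of `A` with rows `a, a+1, …, a+k-1`
and columns `b, b+1, …, b+k-1`. -/
def ctgSub {m n : ℕ} (A : Matrix (Fin m) (Fin n) ℝ) (k a b : ℕ)
    (ha : a + k ≤ m) (hb : b + k ≤ n) : Matrix (Fin k) (Fin k) ℝ :=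
  Matrix.of fun i j => A ⟨a + i.1, by omega⟩ ⟨b + j.1, by omega⟩

/-- `A` is a Hankel matrix: the entry `A i j` depends only on `i + j`. -/
def IsHankel {m n : ℕ} (A : Matrix (Fin m) (Fin n) ℝ) : Prop :=
  ∀ (i i' : Fin m) (j j' : Fin n), i.1 + j.1 = i'.1 + j'.1 → A i j = A i' j'

/-- The Hadamard (entrywise) power `A^{∘t}` with real exponent `t` (via `Real.rpow`). -/
noncomputable def hadPow {m n : ℕ} (A : Matrix (Fin m) (Fin n) ℝ) (t : ℝ) :
    Matrix (Fin m) (Fin n) ℝ :=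
  Matrix.of fun i j => (A i j) ^ t

section FeketeProof


open Matrix

lemma det_updateRow_finsum {N : ℕ} (V : Matrix (Fin N) (Fin N) ℝ) (i : Fin N)
    (v : Fin N → (Fin N → ℝ)) :
    (V.updateRow i (∑ t, v t)).det = ∑ t, (V.updateRow i (v t)).det := by
  classical
  rw [show (∑ t, v t) = ∑ t ∈ Finset.univ, v t from rfl]
  induction (Finset.univ : Finset (Fin N)) using Finset.induction_on with
  | empty =>
      rw [Finset.sum_empty, Finset.sum_empty,
        show (0 : Fin N → ℝ) = (0:ℝ) • (0 : Fin N → ℝ) by simp,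
        Matrix.det_updateRow_smul]
      simp
  | insert _ _ h ih =>
      rw [Finset.sum_insert h, Matrix.det_updateRow_add, ih, Finset.sum_insert h]

lemma cramer_rows {N : ℕ} (W : Matrix (Fin N) (Fin N) ℝ) (b : Fin N → ℝ) :
    ∑ t, (W.updateRow t b).det • W t = W.det • b := by
  have h := Matrix.mulVec_cramer Wᵀ b
  funext j
  have hj := congrFun h j
  simp only [Matrix.mulVec, dotProduct, Matrix.cramer_apply, Matrix.transpose_apply] at hj
  simp only [Finset.sum_apply, Pi.smul_apply, smul_eq_mul]
  rw [← Matrix.det_transpose W]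
  rw [show Wᵀ.det * b j = (Wᵀ.det • b) j from rfl, ← hj]
  refine Finset.sum_congr rfl fun t _ => ?_
  rw [Matrix.updateCol_transpose, Matrix.det_transpose]
  ring

lemma exchange {p : ℕ} (V W : Matrix (Fin (p+1)) (Fin (p+1)) ℝ) :
    V.det * W.det = ∑ t, (W.updateRow t (V 0)).det * (V.updateRow 0 (W t)).det := by
  have h := cramer_rows W (V 0)
  have h2 : (V.updateRow 0 (W.det • V 0)).det = W.det * V.det := by
    rw [show (W.det • V 0 : Fin (p+1) → ℝ) = W.det • V 0 from rfl, Matrix.det_updateRow_smul,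
      Matrix.updateRow_eq_self]
  rw [← h, det_updateRow_finsum] at h2
  rw [mul_comm, ← h2]
  refine Finset.sum_congr rfl fun t _ => ?_
  rw [Matrix.det_updateRow_smul]

open Matrix Fin

/-- basis row vector -/
def eb {N : ℕ} (i : Fin N) : Fin N → ℝ := fun j => if j = i then 1 else 0

lemma submatrix_of_cons {q : ℕ} {α β : Type*} (x : β → ℝ) (R : Fin q → β → ℝ) (c : α → β) :
    (Matrix.of (Fin.cons x R)).submatrix id c
      = Matrix.of (Fin.cons (fun b => x (c b)) (fun a b => R a (c b))) := by
  ext i j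
  refine Fin.cases ?_ (fun a => ?_) i <;> simp [Matrix.submatrix_apply]

lemma submatrix_of_snoc {q : ℕ} {α β : Type*} (S : Fin q → β → ℝ) (y : β → ℝ) (c : α → β) :
    (Matrix.of (Fin.snoc S y)).submatrix id c
      = Matrix.of (Fin.snoc (fun a b => S a (c b)) (fun b => y (c b))) := by
  ext i j
  refine Fin.lastCases ?_ (fun a => ?_) i <;> simp [Matrix.submatrix_apply]

/-- expansion along a basis first row -/
lemma det_cons_eb {q : ℕ} (i : Fin (q+1)) (R : Fin q → Fin (q+1) → ℝ) :
    (Matrix.of (Fin.cons (eb i) R) : Matrix (Fin (q+1)) (Fin (q+1)) ℝ).det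
      = (-1)^(i:ℕ) * ((Matrix.of R).submatrix id i.succAbove).det := by
  rw [Matrix.det_succ_row_zero]
  rw [Finset.sum_eq_single i]
  · have h1 : (Matrix.of (Fin.cons (eb i) R) : Matrix (Fin (q+1)) (Fin (q+1)) ℝ) 0 i = 1 := by
      simp [eb]
    have h2 : (Matrix.of (Fin.cons (eb i) R) : Matrix (Fin (q+1)) (Fin (q+1)) ℝ).submatrix
        Fin.succ i.succAbove = (Matrix.of R).submatrix id i.succAbove := by
      ext a b; simp [Matrix.submatrix_apply]
    rw [h1, mul_one, h2]
  · intro j _ hj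
    have : (Matrix.of (Fin.cons (eb i) R) : Matrix (Fin (q+1)) (Fin (q+1)) ℝ) 0 j = 0 := by
      simp [eb, hj]
    rw [this]; ring
  · intro hi; exact absurd (Finset.mem_univ i) hi

/-- expansion along a basis last row -/
lemma det_snoc_eb {q : ℕ} (i : Fin (q+1)) (S : Fin q → Fin (q+1) → ℝ) :
    (Matrix.of (Fin.snoc S (eb i)) : Matrix (Fin (q+1)) (Fin (q+1)) ℝ).det
      = (-1)^(q + (i:ℕ)) * ((Matrix.of S).submatrix id i.succAbove).det := by
  rw [Matrix.det_succ_row _ (Fin.last q)]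
  rw [Finset.sum_eq_single i]
  · have h1 : (Matrix.of (Fin.snoc S (eb i)) : Matrix (Fin (q+1)) (Fin (q+1)) ℝ) (Fin.last q) i
        = 1 := by simp [eb]
    have h2 : (Matrix.of (Fin.snoc S (eb i)) : Matrix (Fin (q+1)) (Fin (q+1)) ℝ).submatrix
        (Fin.last q).succAbove i.succAbove = (Matrix.of S).submatrix id i.succAbove := by
      ext a b; simp [Matrix.submatrix_apply, Fin.succAbove_last]
    rw [h1, mul_one, h2, Fin.val_last]
  · intro j _ hj
    have : (Matrix.of (Fin.snoc S (eb i)) : Matrix (Fin (q+1)) (Fin (q+1)) ℝ) (Fin.last q) j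
        = 0 := by simp [eb, hj]
    rw [this]; ring
  · intro hi; exact absurd (Finset.mem_univ i) hi

lemma updateRow_of_cons_zero {q : ℕ} (x : Fin (q+1) → ℝ) (R : Fin q → Fin (q+1) → ℝ)
    (y : Fin (q+1) → ℝ) :
    (Matrix.of (Fin.cons x R) : Matrix (Fin (q+1)) (Fin (q+1)) ℝ).updateRow 0 y
      = Matrix.of (Fin.cons y R) := by
  ext i j
  refine Fin.cases ?_ (fun a => ?_) i
  · simp
  · rw [Matrix.updateRow_ne (Fin.succ_ne_zero a)]; simp

lemma updateRow_of_cons_succ {q : ℕ} (x : Fin (q+1) → ℝ) (R : Fin q → Fin (q+1) → ℝ)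
    (a : Fin q) (y : Fin (q+1) → ℝ) :
    (Matrix.of (Fin.cons x R) : Matrix (Fin (q+1)) (Fin (q+1)) ℝ).updateRow a.succ y
      = Matrix.of (Fin.cons x (Function.update R a y)) := by
  ext i j
  refine Fin.cases ?_ (fun b => ?_) i
  · rw [Matrix.updateRow_ne (Fin.succ_ne_zero a).symm]
    simp only [Matrix.of_apply, Fin.cons_zero]
  · by_cases hb : b = a
    · subst hb; simp
    · rw [Matrix.updateRow_ne (by simpa [Fin.succ_inj] using hb : b.succ ≠ a.succ)]
      simp only [Matrix.of_apply, Fin.cons_succ, Function.update_of_ne hb]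

lemma update_zero_cons {q N : ℕ} (R : Fin (q+1) → Fin N → ℝ) (y : Fin N → ℝ) :
    Function.update R 0 y = Fin.cons y (fun a => R a.succ) := by
  funext i
  refine Fin.cases ?_ (fun a => ?_) i
  · simp
  · simp [Function.update_of_ne (Fin.succ_ne_zero a)]

lemma comp_castSucc_cons_snoc {q N : ℕ} (x : Fin N → ℝ) (S : Fin q → Fin N → ℝ)
    (y : Fin N → ℝ) :
    (fun i : Fin (q+1) => (Fin.cons x (Fin.snoc S y) : Fin (q+2) → Fin N → ℝ) i.castSucc)
      = Fin.cons x S := by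
  funext i
  refine Fin.cases ?_ (fun a => ?_) i
  · simp
  · have h : (Fin.succ a).castSucc = (a.castSucc).succ := by
      apply Fin.ext; simp
    rw [h]
    simp

lemma det_cons_snoc_last_eb {q : ℕ} (x : Fin (q+2) → ℝ) (S : Fin q → Fin (q+2) → ℝ) :
    (Matrix.of (Fin.cons x (Fin.snoc S (eb (Fin.last (q+1))))) :
        Matrix (Fin (q+2)) (Fin (q+2)) ℝ).det
      = ((Matrix.of (Fin.cons x S) : Matrix (Fin (q+1)) (Fin (q+2)) ℝ).submatrix
          id Fin.castSucc).det := by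
  rw [Matrix.det_succ_row _ (Fin.last (q+1))]
  rw [Finset.sum_eq_single (Fin.last (q+1))]
  · have hrow : (Matrix.of (Fin.cons x (Fin.snoc S (eb (Fin.last (q+1))))) :
        Matrix (Fin (q+2)) (Fin (q+2)) ℝ) (Fin.last (q+1)) = eb (Fin.last (q+1)) := by
      show (Fin.cons x (Fin.snoc S (eb (Fin.last (q+1)))) : Fin (q+2) → Fin (q+2) → ℝ)
          (Fin.last (q+1)) = _
      rw [show (Fin.last (q+1) : Fin (q+2)) = (Fin.last q).succ from (Fin.succ_last q).symm,
        Fin.cons_succ, Fin.snoc_last]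
    rw [hrow]
    have h1 : eb (Fin.last (q+1)) (Fin.last (q+1)) = 1 := by simp [eb]
    rw [h1, mul_one, Fin.succAbove_last, Fin.val_last]
    have h2 : (Matrix.of (Fin.cons x (Fin.snoc S (eb (Fin.last (q+1))))) :
        Matrix (Fin (q+2)) (Fin (q+2)) ℝ).submatrix Fin.castSucc Fin.castSucc
        = (Matrix.of (Fin.cons x S) : Matrix (Fin (q+1)) (Fin (q+2)) ℝ).submatrix
          id Fin.castSucc := by
      ext a b
      have := congrFun (comp_castSucc_cons_snoc x S (eb (Fin.last (q+1)))) a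
      simp only [Matrix.submatrix_apply, Matrix.of_apply, id_eq]
      exact congrFun this b.castSucc
    rw [h2]
    have : Even ((q+1) + (q+1)) := ⟨q+1, rfl⟩
    rw [this.neg_one_pow, one_mul]
  · intro j _ hj
    have hrow : (Matrix.of (Fin.cons x (Fin.snoc S (eb (Fin.last (q+1))))) :
        Matrix (Fin (q+2)) (Fin (q+2)) ℝ) (Fin.last (q+1)) j = 0 := by
      show (Fin.cons x (Fin.snoc S (eb (Fin.last (q+1)))) : Fin (q+2) → Fin (q+2) → ℝ)
          (Fin.last (q+1)) j = 0
      rw [show (Fin.last (q+1) : Fin (q+2)) = (Fin.last q).succ from (Fin.succ_last q).symm,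
        Fin.cons_succ, Fin.snoc_last]
      simp only [eb]
      rw [if_neg]
      intro hc
      exact hj (hc.trans (Fin.succ_last q))
    rw [hrow]; ring
  · intro hi; exact absurd (Finset.mem_univ (Fin.last (q+1))) hi

lemma of_row {α m n : Type*} (f : m → n → α) (i : m) : Matrix.of f i = f i := rfl

lemma keyIdentity {p : ℕ} (B : Matrix (Fin (p+1)) (Fin (p+2)) ℝ) (s : Fin (p+2))
    (hs0 : s ≠ 0) (hsl : s ≠ Fin.last (p+1)) :
    (B.submatrix id s.succAbove).det *
      (B.submatrix Fin.succ (fun j : Fin p => (j.succ).castSucc)).det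
    = (B.submatrix id Fin.succ).det *
      (B.submatrix Fin.succ (fun j : Fin p => s.succAbove j.castSucc)).det
    + (B.submatrix id Fin.castSucc).det *
      (B.submatrix Fin.succ (fun j : Fin p => s.succAbove j.succ)).det := by
  have hsA0 : s.succAbove 0 = 0 := by
    rw [Fin.succAbove_of_castSucc_lt s 0 (by simpa using Fin.pos_of_ne_zero hs0)]
    simp
  have hsle : s ≤ (Fin.last p).castSucc := by
    have h1 := s.isLt
    have h2 : s.val ≠ p+1 := fun hc => hsl (Fin.ext (by simpa using hc))
    rw [Fin.le_def]
    simp only [Fin.coe_castSucc, Fin.val_last]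
    omega
  have hsAlast : s.succAbove (Fin.last p) = Fin.last (p+1) := by
    rw [Fin.succAbove_of_le_castSucc s (Fin.last p) hsle, Fin.succ_last]
  -- abbreviations
  set S : Fin p → Fin (p+2) → ℝ := fun a => B a.succ with hS
  set V : Matrix (Fin (p+2)) (Fin (p+2)) ℝ :=
    Matrix.of (Fin.cons (eb 0) (Fin.snoc S (eb (Fin.last (p+1))))) with hV
  set W : Matrix (Fin (p+2)) (Fin (p+2)) ℝ :=
    Matrix.of (Fin.cons (eb s) (fun a : Fin (p+1) => B a)) with hW
  have hV0 : V 0 = eb 0 := by rw [hV, _root_.of_row, Fin.cons_zero]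
  have hW0 : W 0 = eb s := by rw [hW, _root_.of_row, Fin.cons_zero]
  have hWsucc : ∀ a : Fin (p+1), W a.succ = B a := fun a => by rw [hW, _root_.of_row, Fin.cons_succ]
  -- det V
  have hebsucc : (fun b : Fin (p+1) => eb (Fin.last (p+1)) b.succ) = eb (Fin.last p) := by
    funext b
    simp only [eb]
    by_cases hb : b = Fin.last p
    · subst hb; rw [if_pos (Fin.succ_last p), if_pos rfl]
    · rw [if_neg (fun hc => hb (Fin.succ_injective _ (hc.trans (Fin.succ_last p).symm))),
        if_neg hb]
  have hdV : V.det = (B.submatrix Fin.succ (fun j : Fin p => (j.succ).castSucc)).det := by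
    rw [hV, det_cons_eb, Fin.succAbove_zero, submatrix_of_snoc, hebsucc, det_snoc_eb,
      Fin.succAbove_last, Fin.val_last, Fin.val_zero, pow_zero, one_mul,
      Even.neg_one_pow ⟨p, rfl⟩, one_mul]
    rfl
  -- det W
  have hdW : W.det = (-1)^(s:ℕ) * (B.submatrix id s.succAbove).det := by
    rw [hW, det_cons_eb]
    rfl
  -- term t = 0
  have hT0a : (W.updateRow 0 (eb 0)).det = (B.submatrix id Fin.succ).det := by
    rw [hW, updateRow_of_cons_zero, det_cons_eb, Fin.val_zero, pow_zero, one_mul,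
      Fin.succAbove_zero]
    rfl
  have hebs_sA : (fun b : Fin (p+1) => eb (Fin.last (p+1)) (s.succAbove b)) = eb (Fin.last p) := by
    funext b
    simp only [eb]
    by_cases hb : b = Fin.last p
    · subst hb; rw [if_pos hsAlast, if_pos rfl]
    · rw [if_neg (fun hc => hb (Fin.succAbove_right_injective (hc.trans hsAlast.symm))),
        if_neg hb]
  have hT0b : (V.updateRow 0 (eb s)).det
      = (-1)^(s:ℕ) * (B.submatrix Fin.succ (fun j : Fin p => s.succAbove j.castSucc)).det := by
    rw [hV, updateRow_of_cons_zero, det_cons_eb, submatrix_of_snoc, hebs_sA, det_snoc_eb,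
      Fin.succAbove_last, Fin.val_last, Even.neg_one_pow ⟨p, rfl⟩, one_mul]
    rfl
  -- term t = succ 0
  have heb0_sA : (fun b : Fin (p+1) => eb (0 : Fin (p+2)) (s.succAbove b))
      = eb (0 : Fin (p+1)) := by
    funext b
    simp only [eb]
    by_cases hb : b = 0
    · subst hb; rw [if_pos hsA0, if_pos rfl]
    · rw [if_neg (fun hc => hb (Fin.succAbove_right_injective (hc.trans hsA0.symm))),
        if_neg hb]
  have hTUa : (W.updateRow ((0 : Fin (p+1)).succ) (eb 0)).det
      = (-1)^(s:ℕ) * (B.submatrix Fin.succ (fun j : Fin p => s.succAbove j.succ)).det := by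
    rw [hW, updateRow_of_cons_succ, update_zero_cons, det_cons_eb, submatrix_of_cons,
      heb0_sA, det_cons_eb, Fin.val_zero, pow_zero, one_mul, Fin.succAbove_zero]
    rfl
  have hconsB : (Fin.cons (B 0) S : Fin (p+1) → Fin (p+2) → ℝ) = fun a => B a := by
    funext i
    refine Fin.cases ?_ (fun a => ?_) i
    · exact Fin.cons_zero _ _
    · exact Fin.cons_succ _ _ _
  have hTUb : (V.updateRow 0 (W ((0 : Fin (p+1)).succ))).det
      = (B.submatrix id Fin.castSucc).det := by
    rw [hWsucc, hV, updateRow_of_cons_zero, det_cons_snoc_last_eb, hconsB]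
    rfl
  -- vanishing terms
  have hvanish : ∀ b : Fin p, (V.updateRow 0 (W (b.succ.succ))).det = 0 := by
    intro b
    rw [hWsucc, hV, updateRow_of_cons_zero]
    apply Matrix.det_zero_of_row_eq (i := 0) (j := (b.castSucc).succ) (Fin.succ_ne_zero _).symm
    have h1 : (Matrix.of (Fin.cons (B b.succ) (Fin.snoc S (eb (Fin.last (p+1))))) :
        Matrix (Fin (p+2)) (Fin (p+2)) ℝ) 0 = B b.succ := by
      rw [_root_.of_row, Fin.cons_zero]
    have h2 : (Matrix.of (Fin.cons (B b.succ) (Fin.snoc S (eb (Fin.last (p+1))))) :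
        Matrix (Fin (p+2)) (Fin (p+2)) ℝ) ((b.castSucc).succ) = B b.succ := by
      rw [_root_.of_row, Fin.cons_succ, Fin.snoc_castSucc]
    rw [h1, h2]
  -- assemble
  have hexch := exchange V W
  rw [Fin.sum_univ_succ, Fin.sum_univ_succ] at hexch
  rw [hV0, hW0, hT0a, hT0b, hTUa, hTUb] at hexch
  have hsum0 : ∑ i : Fin p,
      (W.updateRow i.succ.succ (eb 0)).det * (V.updateRow 0 (W i.succ.succ)).det = 0 :=
    Finset.sum_eq_zero fun b _ => by rw [hvanish b, mul_zero]
  rw [hsum0, add_zero, hdV, hdW] at hexch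
  have hpow : ((-1:ℝ))^(s:ℕ) ≠ 0 := pow_ne_zero _ (by norm_num)
  apply mul_left_cancel₀ hpow
  linear_combination hexch

lemma sm_le {k N : ℕ} {g : Fin k → Fin N} (hg : StrictMono g) :
    ∀ d : ℕ, ∀ i j : Fin k, (j:ℕ) = (i:ℕ) + d → (g i : ℕ) + d ≤ (g j : ℕ) := by
  intro d
  induction d with
  | zero =>
      intro i j hj
      have : i = j := Fin.ext (by omega)
      subst this; omega
  | succ d ih =>
      intro i j hj
      have hd : (i:ℕ) + d < k := by have := j.isLt; omega
      have h1 := ih i ⟨(i:ℕ) + d, hd⟩ rfl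
      have h2 : g ⟨(i:ℕ) + d, hd⟩ < g j := hg (by rw [Fin.lt_def]; simp; omega)
      rw [Fin.lt_def] at h2
      omega

lemma exists_gap {p N : ℕ} {g : Fin (p+1) → Fin N}
    (hd : (g 0 : ℕ) + p < (g (Fin.last p) : ℕ)) :
    ∃ t : Fin p, (g t.castSucc : ℕ) + 1 < (g t.succ : ℕ) := by
  by_contra hc
  push_neg at hc
  have hbound : ∀ i : Fin (p+1), (g i : ℕ) ≤ (g 0 : ℕ) + (i:ℕ) := by
    intro i
    induction i using Fin.induction with
    | zero => simp
    | succ t ih =>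
        have := hc t
        have h1 : ((t.castSucc : Fin (p+1)) : ℕ) = (t:ℕ) := by simp
        have h2 : ((t.succ : Fin (p+1)) : ℕ) = (t:ℕ) + 1 := by simp
        omega
  have := hbound (Fin.last p)
  simp [Fin.val_last] at this
  omega

lemma contig_of {p N : ℕ} {g : Fin (p+1) → Fin N} (hg : StrictMono g)
    (hd : (g (Fin.last p) : ℕ) ≤ (g 0 : ℕ) + p) (i : Fin (p+1)) :
    (g i : ℕ) = (g 0 : ℕ) + (i:ℕ) := by
  have h1 := sm_le hg (i:ℕ) 0 i (by simp)
  have h2 := sm_le hg (p - (i:ℕ)) i (Fin.last p) (by simp [Fin.val_last]; omega)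
  omega

lemma insert_gap {p N : ℕ} {g : Fin (p+1) → Fin N} (hg : StrictMono g) (t : Fin p)
    (hgap : (g t.castSucc : ℕ) + 1 < (g t.succ : ℕ)) :
    ∃ (c : Fin (p+2) → Fin N) (s : Fin (p+2)),
      StrictMono c ∧ s ≠ 0 ∧ s ≠ Fin.last (p+1) ∧ (∀ j : Fin (p+1), c (s.succAbove j) = g j) ∧
      c 0 = g 0 ∧ c (Fin.last (p+1)) = g (Fin.last p) ∧
      (g 0 : ℕ) < (c 1 : ℕ) ∧ (c ((Fin.last p).castSucc) : ℕ) < (g (Fin.last p) : ℕ) := by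
  have htp : (t:ℕ) < p := t.isLt
  have hN : (g t.succ : ℕ) < N := (g t.succ).isLt
  set c : Fin (p+2) → Fin N := fun i =>
    if h : (i:ℕ) ≤ (t:ℕ) then g ⟨(i:ℕ), by omega⟩
    else if h2 : (i:ℕ) = (t:ℕ)+1 then ⟨(g t.castSucc : ℕ)+1, by omega⟩
    else g ⟨(i:ℕ)-1, by have := i.isLt; omega⟩ with hcdef
  have hA : ∀ (i : Fin (p+2)) (h : (i:ℕ) ≤ (t:ℕ)), c i = g ⟨(i:ℕ), by omega⟩ := by
    intro i h; rw [hcdef]; simp only; rw [dif_pos h]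
  have hB : ∀ (i : Fin (p+2)) (h : (i:ℕ) = (t:ℕ)+1),
      (c i : ℕ) = (g t.castSucc : ℕ)+1 := by
    intro i h; rw [hcdef]; simp only; rw [dif_neg (by omega), dif_pos h]
  have hC : ∀ (i : Fin (p+2)) (h1 : ¬ (i:ℕ) ≤ (t:ℕ)) (h2 : (i:ℕ) ≠ (t:ℕ)+1),
      c i = g ⟨(i:ℕ)-1, by have := i.isLt; omega⟩ := by
    intro i h1 h2; rw [hcdef]; simp only; rw [dif_neg h1, dif_neg h2]
  have hgmono : ∀ (a b : Fin (p+1)), (a:ℕ) < (b:ℕ) → (g a : ℕ) < (g b : ℕ) := by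
    intro a b hab
    have := hg (show a < b from by rwa [Fin.lt_def])
    rwa [Fin.lt_def] at this
  have hcmono : StrictMono c := by
    rw [Fin.strictMono_iff_lt_succ]
    intro i
    have hic : ((i.castSucc : Fin (p+2)) : ℕ) = (i:ℕ) := by simp
    have his : ((i.succ : Fin (p+2)) : ℕ) = (i:ℕ)+1 := by simp
    rw [Fin.lt_def]
    rcases Nat.lt_trichotomy (i:ℕ) (t:ℕ) with hlt | heq | hgt
    · rw [hA i.castSucc (by omega), hA i.succ (by omega)]
      exact hgmono _ _ (by simp; try omega)
    · rw [hA i.castSucc (by omega)]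
      have := hB i.succ (by omega)
      rw [this]
      have : g ⟨((i.castSucc : Fin (p+2)) : ℕ), by omega⟩ = g t.castSucc := by
        congr 1; apply Fin.ext; simp; omega
      rw [this]
      omega
    · by_cases heq2 : (i:ℕ) = (t:ℕ)+1
      · have h1 := hB i.castSucc (by omega)
        rw [hC i.succ (by omega) (by omega), h1]
        have : g ⟨((i.succ : Fin (p+2)) : ℕ)-1, by have := i.isLt; omega⟩ = g t.succ := by
          congr 1; apply Fin.ext; simp; omega
        rw [this]
        omega
      · rw [hC i.castSucc (by omega) (by omega), hC i.succ (by omega) (by omega)]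
        apply hgmono
        simp only [Fin.val_mk, Fin.coe_castSucc, Fin.val_succ]
        omega
  refine ⟨c, ⟨(t:ℕ)+1, by omega⟩, hcmono, ?_, ?_, ?_, ?_, ?_, ?_, ?_⟩
  · intro hc0; have := congrArg Fin.val hc0; simp at this
  · intro hcl; have := congrArg Fin.val hcl; simp [Fin.val_last] at this; omega
  · intro j
    by_cases hj : (j:ℕ) ≤ (t:ℕ)
    · have hsA : (⟨(t:ℕ)+1, by omega⟩ : Fin (p+2)).succAbove j = j.castSucc :=
        Fin.succAbove_of_castSucc_lt _ _ (by rw [Fin.lt_def]; simp; omega)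
      rw [hsA, hA j.castSucc (by simp; omega)]
      exact congrArg g (Fin.ext (by simp; try omega))
    · have hsA : (⟨(t:ℕ)+1, by omega⟩ : Fin (p+2)).succAbove j = j.succ :=
        Fin.succAbove_of_le_castSucc _ _ (by rw [Fin.le_def]; simp; omega)
      rw [hsA, hC j.succ (by simp; omega) (by simp; omega)]
      exact congrArg g (Fin.ext (by simp; try omega))
  · rw [hA 0 (by simp)]
    exact congrArg g (Fin.ext (by simp; try omega))
  · rw [hC (Fin.last (p+1)) (by simp [Fin.val_last]) (by simp [Fin.val_last]; omega)]
    exact congrArg g (Fin.ext (by simp [Fin.val_last]; try omega))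
  · by_cases h1t : 1 ≤ (t:ℕ)
    · rw [hA 1 (by simpa using h1t)]
      have : ((1 : Fin (p+2)) : ℕ) = 1 := rfl
      apply hgmono
      simp
    · have := hB 1 (by simp; omega)
      rw [this]
      have h0 : g t.castSucc = g 0 := by congr 1; apply Fin.ext; simp; omega
      rw [h0]
      omega
  · have hplast : (((Fin.last p).castSucc : Fin (p+2)) : ℕ) = p := by simp [Fin.val_last]
    by_cases hpt : p = (t:ℕ)+1
    · have := hB (Fin.last p).castSucc (by omega)
      rw [this]
      have : (g t.succ : ℕ) ≤ (g (Fin.last p) : ℕ) := by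
        have := sm_le hg (p - ((t:ℕ)+1)) t.succ (Fin.last p) (by simp [Fin.val_last])
        omega
      omega
    · rw [hC (Fin.last p).castSucc (by omega) (by omega)]
      apply hgmono
      simp [Fin.val_last]
      omega

lemma det_t {m n : ℕ} (A : Matrix (Fin m) (Fin n) ℝ) {k : ℕ} (f : Fin k → Fin m)
    (g : Fin k → Fin n) : (Aᵀ.submatrix g f).det = (A.submatrix f g).det := by
  rw [← Matrix.transpose_submatrix, Matrix.det_transpose]

theorem fekete {m n : ℕ} (r : ℕ) (A : Matrix (Fin m) (Fin n) ℝ)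
    (h : ∀ (k a b : ℕ) (ha : a + k ≤ m) (hb : b + k ≤ n),
      k ≤ r → 0 < (ctgSub A k a b ha hb).det) :
    IsTPr A r := by
  intro k
  induction k using Nat.strong_induction_on with
  | _ k IH =>
  intro hk f g hf hg
  match k, IH, hk, f, g, hf, hg with
  | 0, IH, hk, f, g, hf, hg => rw [Matrix.det_isEmpty]; exact one_pos
  | (p+1), IH, hk, f, g, hf, hg =>
  -- base : both contiguous
  have hbase : ∀ (f : Fin (p+1) → Fin m) (g : Fin (p+1) → Fin n), StrictMono f →
      StrictMono g → (f (Fin.last p) : ℕ) ≤ (f 0 : ℕ) + p →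
      (g (Fin.last p) : ℕ) ≤ (g 0 : ℕ) + p → 0 < (A.submatrix f g).det := by
    intro f g hf hg hfc hgc
    have hfi := contig_of hf hfc
    have hgi := contig_of hg hgc
    have ham : (f 0 : ℕ) + (p+1) ≤ m := by
      have h1 := (f (Fin.last p)).isLt
      have h2 := hfi (Fin.last p)
      simp [Fin.val_last] at h2
      omega
    have hbn : (g 0 : ℕ) + (p+1) ≤ n := by
      have h1 := (g (Fin.last p)).isLt
      have h2 := hgi (Fin.last p)
      simp [Fin.val_last] at h2
      omega
    have heq : A.submatrix f g = ctgSub A (p+1) (f 0) (g 0) ham hbn := by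
      ext i j
      simp only [Matrix.submatrix_apply, ctgSub, Matrix.of_apply]
      congr 1
      · exact Fin.ext (hfi i)
      · exact Fin.ext (hgi j)
    rw [heq]
    exact h (p+1) _ _ ham hbn hk
  have hpr : p ≤ r := by omega
  -- stage 1 : columns contiguous, induction on row spread
  have hstage1 : ∀ (dr : ℕ) (f : Fin (p+1) → Fin m) (g : Fin (p+1) → Fin n),
      StrictMono f → StrictMono g → (f (Fin.last p) : ℕ) ≤ (f 0 : ℕ) + dr →
      (g (Fin.last p) : ℕ) ≤ (g 0 : ℕ) + p → 0 < (A.submatrix f g).det := by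
    intro dr
    induction dr with
    | zero => intro f g hf hg hfd hgc; exact hbase f g hf hg (by omega) hgc
    | succ d ihd =>
      intro f g hf hg hfd hgc
      by_cases hcase : (f (Fin.last p) : ℕ) ≤ (f 0 : ℕ) + p
      · exact hbase f g hf hg hcase hgc
      · push_neg at hcase
        obtain ⟨t, hgap⟩ := exists_gap (g := f) (by omega)
        obtain ⟨c, s, hc, hs0, hsl, hcs, hc0, hclast, hc1, hcp⟩ := insert_gap hf t hgap
        have hkey := keyIdentity (Aᵀ.submatrix g c) s hs0 hsl
        have hrw : ∀ (q' : ℕ) (rmap : Fin q' → Fin (p+1)) (cmap : Fin q' → Fin (p+2)),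
            ((Aᵀ.submatrix g c).submatrix rmap cmap).det
              = (A.submatrix (c ∘ cmap) (g ∘ rmap)).det := by
          intro q' rmap cmap
          rw [Matrix.submatrix_submatrix, det_t]
        rw [hrw, hrw, hrw, hrw, hrw, hrw] at hkey
        have hcf : c ∘ s.succAbove = f := funext hcs
        rw [hcf, Function.comp_id] at hkey
        have hsuc0 : Fin.succ (0 : Fin (p+1)) = (1 : Fin (p+2)) := Fin.ext (by simp)
        -- positivity of the five known minors
        have hD0 : 0 < (A.submatrix (c ∘ Fin.succ) (g ∘ id)).det := by
          rw [Function.comp_id]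
          apply ihd _ _ (hc.comp Fin.strictMono_succ) hg _ hgc
          have h1 : (c ∘ Fin.succ) (Fin.last p) = f (Fin.last p) := by
            simp only [Function.comp_apply, Fin.succ_last]
            rw [hclast]
          have h2 : (c ∘ Fin.succ) 0 = c 1 := by
            simp only [Function.comp_apply, hsuc0]
          rw [h1, h2]
          omega
        have hDl : 0 < (A.submatrix (c ∘ Fin.castSucc) (g ∘ id)).det := by
          rw [Function.comp_id]
          apply ihd _ _ (hc.comp Fin.strictMono_castSucc) hg _ hgc
          have h1 : (c ∘ Fin.castSucc) (Fin.last p) = c ((Fin.last p).castSucc) := rfl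
          have h2 : (c ∘ Fin.castSucc) 0 = f 0 := by
            simp only [Function.comp_apply, Fin.castSucc_zero]
            exact hc0
          rw [h1, h2]
          omega
        have hsA : StrictMono s.succAbove := fun a b hab =>
          Fin.succAbove_lt_succAbove_iff.mpr hab
        have hE0l : 0 < (A.submatrix (c ∘ fun j : Fin p => (j.succ).castSucc)
            (g ∘ Fin.succ)).det :=
          IH p (by omega) hpr _ _
            (hc.comp (Fin.strictMono_castSucc.comp Fin.strictMono_succ))
            (hg.comp Fin.strictMono_succ)
        have hEsl : 0 < (A.submatrix (c ∘ fun j : Fin p => s.succAbove j.castSucc)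
            (g ∘ Fin.succ)).det :=
          IH p (by omega) hpr _ _ (hc.comp (hsA.comp Fin.strictMono_castSucc))
            (hg.comp Fin.strictMono_succ)
        have hE0s : 0 < (A.submatrix (c ∘ fun j : Fin p => s.succAbove j.succ)
            (g ∘ Fin.succ)).det :=
          IH p (by omega) hpr _ _ (hc.comp (hsA.comp Fin.strictMono_succ))
            (hg.comp Fin.strictMono_succ)
        have hpos : 0 < (A.submatrix f g).det * (A.submatrix
            (c ∘ fun j : Fin p => (j.succ).castSucc) (g ∘ Fin.succ)).det := by
          rw [hkey]
          positivity
        rcases mul_pos_iff.mp hpos with ⟨h1, _⟩ | ⟨_, h2⟩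
        · exact h1
        · linarith
  -- stage 2 : induction on column spread
  have hstage2 : ∀ (dc : ℕ) (f : Fin (p+1) → Fin m) (g : Fin (p+1) → Fin n),
      StrictMono f → StrictMono g → (g (Fin.last p) : ℕ) ≤ (g 0 : ℕ) + dc →
      0 < (A.submatrix f g).det := by
    intro dc
    induction dc with
    | zero =>
      intro f g hf hg hgd
      exact hstage1 ((f (Fin.last p) : ℕ)) f g hf hg (by omega) (by omega)
    | succ d ihd =>
      intro f g hf hg hgd
      by_cases hcase : (g (Fin.last p) : ℕ) ≤ (g 0 : ℕ) + p
      · exact hstage1 ((f (Fin.last p) : ℕ)) f g hf hg (by omega) hcase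
      · push_neg at hcase
        obtain ⟨t, hgap⟩ := exists_gap (g := g) (by omega)
        obtain ⟨c, s, hc, hs0, hsl, hcs, hc0, hclast, hc1, hcp⟩ := insert_gap hg t hgap
        have hkey := keyIdentity (A.submatrix f c) s hs0 hsl
        have hrw : ∀ (q' : ℕ) (rmap : Fin q' → Fin (p+1)) (cmap : Fin q' → Fin (p+2)),
            ((A.submatrix f c).submatrix rmap cmap).det
              = (A.submatrix (f ∘ rmap) (c ∘ cmap)).det := by
          intro q' rmap cmap
          rw [Matrix.submatrix_submatrix]
        rw [hrw, hrw, hrw, hrw, hrw, hrw] at hkey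
        have hcf : c ∘ s.succAbove = g := funext hcs
        rw [hcf, Function.comp_id] at hkey
        have hsuc0 : Fin.succ (0 : Fin (p+1)) = (1 : Fin (p+2)) := Fin.ext (by simp)
        have hD0 : 0 < (A.submatrix (f ∘ id) (c ∘ Fin.succ)).det := by
          rw [Function.comp_id]
          apply ihd _ _ hf (hc.comp Fin.strictMono_succ)
          have h1 : (c ∘ Fin.succ) (Fin.last p) = g (Fin.last p) := by
            simp only [Function.comp_apply, Fin.succ_last]
            rw [hclast]
          have h2 : (c ∘ Fin.succ) 0 = c 1 := by
            simp only [Function.comp_apply, hsuc0]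
          show ((c ∘ Fin.succ) (Fin.last p) : ℕ) ≤ ((c ∘ Fin.succ) 0 : ℕ) + d
          rw [h1, h2]
          omega
        have hDl : 0 < (A.submatrix (f ∘ id) (c ∘ Fin.castSucc)).det := by
          rw [Function.comp_id]
          apply ihd _ _ hf (hc.comp Fin.strictMono_castSucc)
          have h1 : (c ∘ Fin.castSucc) (Fin.last p) = c ((Fin.last p).castSucc) := rfl
          have h2 : (c ∘ Fin.castSucc) 0 = g 0 := by
            simp only [Function.comp_apply, Fin.castSucc_zero]
            exact hc0
          show ((c ∘ Fin.castSucc) (Fin.last p) : ℕ) ≤ ((c ∘ Fin.castSucc) 0 : ℕ) + d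
          rw [h1, h2]
          omega
        have hsA : StrictMono s.succAbove := fun a b hab =>
          Fin.succAbove_lt_succAbove_iff.mpr hab
        have hE0l : 0 < (A.submatrix (f ∘ Fin.succ)
            (c ∘ fun j : Fin p => (j.succ).castSucc)).det :=
          IH p (by omega) hpr _ _ (hf.comp Fin.strictMono_succ)
            (hc.comp (Fin.strictMono_castSucc.comp Fin.strictMono_succ))
        have hEsl : 0 < (A.submatrix (f ∘ Fin.succ)
            (c ∘ fun j : Fin p => s.succAbove j.castSucc)).det :=
          IH p (by omega) hpr _ _ (hf.comp Fin.strictMono_succ)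
            (hc.comp (hsA.comp Fin.strictMono_castSucc))
        have hE0s : 0 < (A.submatrix (f ∘ Fin.succ)
            (c ∘ fun j : Fin p => s.succAbove j.succ)).det :=
          IH p (by omega) hpr _ _ (hf.comp Fin.strictMono_succ)
            (hc.comp (hsA.comp Fin.strictMono_succ))
        have hpos : 0 < (A.submatrix f g).det * (A.submatrix (f ∘ Fin.succ)
            (c ∘ fun j : Fin p => (j.succ).castSucc)).det := by
          rw [hkey]
          positivity
        rcases mul_pos_iff.mp hpos with ⟨h1, _⟩ | ⟨_, h2⟩
        · exact h1
        · linarith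
  exact hstage2 ((g (Fin.last p) : ℕ)) f g hf hg (by omega)

end FeketeProof

/-- Fekete. If all contiguous minors of `A` of size at most `r` are
positive, then `A` is totally positive of order `r`. -/
theorem contiguous_minors_pos_imp_TPr {m n : ℕ} (hm : 1 ≤ m) (hn : 1 ≤ n)
    (r : ℕ) (hr : 1 ≤ r) (A : Matrix (Fin m) (Fin n) ℝ)
    (h : ∀ (k a b : ℕ) (ha : a + k ≤ m) (hb : b + k ≤ n),
      k ≤ r → 0 < (ctgSub A k a b ha hb).det) :
    IsTPr A r := by
  exact fekete r A h
end

section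
/- Let A be an m-by-n real matrix and let r ≥ 1. Suppose that all the initial minors of A of size at most r−1 are positive, and that all the contiguous minors of A of size r are positive. Then A is totally positive of order r (TP_r). -/
namespace DJaux

open Matrix

set_option maxHeartbeats 1000000


variable {k : ℕ}

def bl (A : Matrix (Fin 2) (Fin 2) ℝ) (B : Matrix (Fin 2) (Fin k) ℝ)
    (C : Matrix (Fin k) (Fin 2) ℝ) (D : Matrix (Fin k) (Fin k) ℝ) (i j : Fin 2) :
    Matrix (Unit ⊕ Fin k) (Unit ⊕ Fin k) ℝ :=
  Matrix.fromBlocks (Matrix.of fun _ _ => A i j) (Matrix.of fun _ l => B i l)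
    (Matrix.of fun l _ => C l j) D

lemma blockDJ (A : Matrix (Fin 2) (Fin 2) ℝ) (B : Matrix (Fin 2) (Fin k) ℝ)
    (C : Matrix (Fin k) (Fin 2) ℝ) (D : Matrix (Fin k) (Fin k) ℝ) (hD : D.det ≠ 0) :
    (Matrix.fromBlocks A B C D).det * D.det =
      (bl A B C D 0 0).det * (bl A B C D 1 1).det
        - (bl A B C D 0 1).det * (bl A B C D 1 0).det := by
  haveI : Invertible D := D.invertibleOfIsUnitDet hD.isUnit
  have hS : ∀ i j : Fin 2, (bl A B C D i j).det = D.det * (A - B * ⅟D * C) i j := by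
    intro i j
    rw [bl, Matrix.det_fromBlocks₂₂]
    congr 1
    rw [Matrix.det_unique]
    simp [Matrix.sub_apply, Matrix.mul_apply, Finset.sum_mul]
  rw [Matrix.det_fromBlocks₂₂, hS, hS, hS, hS, Matrix.det_fin_two]
  ring

def midf (k : ℕ) : Fin k → Fin (k + 2) := fun i => i.succ.castSucc

@[simp] lemma midf_val {k : ℕ} (i : Fin k) : ((midf k i) : ℕ) = i.1 + 1 := rfl

def rcf (k : ℕ) : Fin 2 → Fin (k + 2) := ![0, Fin.last (k + 1)]

def eBig (k : ℕ) : (Fin 2 ⊕ Fin k) ≃ Fin (k + 2) where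
  toFun := Sum.elim (rcf k) (midf k)
  invFun := fun x =>
    if h0 : x.1 = 0 then Sum.inl 0 else if h1 : x.1 = k + 1 then Sum.inl 1 else
      Sum.inr ⟨x.1 - 1, by omega⟩
  left_inv := by
    rintro (i | i)
    · fin_cases i <;> simp [midf, rcf, Fin.last]
    · have h1 : (midf k i).1 = i.1 + 1 := rfl
      simp only [Sum.elim_inr, h1]
      have h0 : ¬ i.1 + 1 = 0 := by omega
      have h2 : ¬ i.1 + 1 = k + 1 := by omega
      simp [h0, h2]; have := i.isLt; omega
  right_inv := by
    intro x
    by_cases h0 : x.1 = 0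
    · have : x = 0 := by ext; simpa using h0
      simp [this, rcf]
    · by_cases h1 : x.1 = k + 1
      · have : x = Fin.last (k+1) := by ext; simpa using h1
        simp [h0, h1, this, rcf]
      · simp only [h0, h1, if_false, Sum.elim_inr]
        ext; simp [midf]; omega

def eL (k : ℕ) : (Unit ⊕ Fin k) ≃ Fin (k + 1) where
  toFun := Sum.elim (fun _ => 0) Fin.succ
  invFun := fun x => if h : x.1 = 0 then Sum.inl () else Sum.inr ⟨x.1 - 1, by omega⟩
  left_inv := by
    rintro (i | i)
    · simp
    · simp [Fin.ext_iff]
  right_inv := by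
    intro x
    by_cases h : x.1 = 0
    · have : x = 0 := by ext; simpa using h
      simp [h, this]
    · simp only [h, if_false, Sum.elim_inr]
      ext; simp; omega

def eR (k : ℕ) : (Unit ⊕ Fin k) ≃ Fin (k + 1) where
  toFun := Sum.elim (fun _ => Fin.last k) Fin.castSucc
  invFun := fun x => if h : x.1 = k then Sum.inl () else Sum.inr ⟨x.1, by omega⟩
  left_inv := by
    rintro (i | i)
    · simp [Fin.last]
    · have h2 : (i.castSucc).1 ≠ k := by simp; omega
      have h3 : (i:ℕ) ≠ k := by simpa using h2
      simp [h2, h3, Fin.ext_iff]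
  right_inv := by
    intro x
    by_cases h : x.1 = k
    · have : x = Fin.last k := by ext; simpa using h
      simp [h, this]
    · simp only [h, if_false, Sum.elim_inr]
      ext; simp

theorem dj_core (M : Matrix (Fin (k + 2)) (Fin (k + 2)) ℝ)
    (hD : (M.submatrix (midf k) (midf k)).det ≠ 0) :
    M.det * (M.submatrix (midf k) (midf k)).det =
      (M.submatrix Fin.castSucc Fin.castSucc).det * (M.submatrix Fin.succ Fin.succ).det
        - (M.submatrix Fin.castSucc Fin.succ).det * (M.submatrix Fin.succ Fin.castSucc).det := by
  set A : Matrix (Fin 2) (Fin 2) ℝ := Matrix.of fun i j => M (rcf k i) (rcf k j) with hA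
  set B : Matrix (Fin 2) (Fin k) ℝ := Matrix.of fun i j => M (rcf k i) (midf k j) with hB
  set C : Matrix (Fin k) (Fin 2) ℝ := Matrix.of fun i j => M (midf k i) (rcf k j) with hC
  set D : Matrix (Fin k) (Fin k) ℝ := M.submatrix (midf k) (midf k) with hDdef
  have hcs : ∀ i : Fin k, (Fin.castSucc (Fin.succ i)) = midf k i := fun i => rfl
  have hsc : ∀ i : Fin k, (Fin.succ (Fin.castSucc i)) = midf k i := by
    intro i; ext; simp [midf]
  have hrc0 : rcf k 0 = 0 := rfl
  have hrc1 : rcf k 1 = Fin.last (k + 1) := rfl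
  -- determinant of the big matrix
  have hbig : (fromBlocks A B C D).det = M.det := by
    rw [show fromBlocks A B C D = M.submatrix (eBig k) (eBig k) by
      ext i j
      rcases i with i | i <;> rcases j with j | j <;>
        simp [eBig, fromBlocks, hA, hB, hC, hDdef]]
    exact Matrix.det_submatrix_equiv_self _ _
  have h00 : (bl A B C D 0 0).det = (M.submatrix Fin.castSucc Fin.castSucc).det := by
    rw [show bl A B C D 0 0
        = (M.submatrix Fin.castSucc Fin.castSucc).submatrix (eL k) (eL k) by
      ext i j
      rcases i with i | i <;> rcases j with j | j <;>
        simp [eL, bl, fromBlocks, hA, hB, hC, hDdef, hcs, hrc0]]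
    exact Matrix.det_submatrix_equiv_self _ _
  have h11 : (bl A B C D 1 1).det = (M.submatrix Fin.succ Fin.succ).det := by
    rw [show bl A B C D 1 1
        = (M.submatrix Fin.succ Fin.succ).submatrix (eR k) (eR k) by
      ext i j
      rcases i with i | i <;> rcases j with j | j <;>
        simp [eR, bl, fromBlocks, hA, hB, hC, hDdef, hsc, hrc1, Fin.succ_last]]
    exact Matrix.det_submatrix_equiv_self _ _
  -- the two crossing terms
  have h01 : bl A B C D 0 1
      = (M.submatrix Fin.castSucc Fin.succ).submatrix (eL k) (eR k) := by
    ext i j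
    rcases i with i | i <;> rcases j with j | j <;>
      simp [eL, eR, bl, fromBlocks, hA, hB, hC, hDdef, hcs, hsc, hrc0, hrc1, Fin.succ_last]
  have h10 : bl A B C D 1 0
      = (M.submatrix Fin.succ Fin.castSucc).submatrix (eR k) (eL k) := by
    ext i j
    rcases i with i | i <;> rcases j with j | j <;>
      simp [eL, eR, bl, fromBlocks, hA, hB, hC, hDdef, hcs, hsc, hrc0, hrc1, Fin.succ_last]
  set σ : Equiv.Perm (Unit ⊕ Fin k) := (eL k).trans (eR k).symm with hσ
  have hsub01 : (M.submatrix Fin.castSucc Fin.succ).submatrix (eL k) (eR k)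
      = ((M.submatrix Fin.castSucc Fin.succ).submatrix (eL k) (eL k)).submatrix id σ.symm := by
    ext i j
    simp [σ, Matrix.submatrix_apply]
  have hsub10 : (M.submatrix Fin.succ Fin.castSucc).submatrix (eR k) (eL k)
      = ((M.submatrix Fin.succ Fin.castSucc).submatrix (eR k) (eR k)).submatrix id σ := by
    ext i j
    simp [σ, Matrix.submatrix_apply]
  have hcross : (bl A B C D 0 1).det * (bl A B C D 1 0).det
      = (M.submatrix Fin.castSucc Fin.succ).det * (M.submatrix Fin.succ Fin.castSucc).det := by
    rw [h01, h10, hsub01, hsub10, Matrix.det_permute', Matrix.det_permute',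
      Matrix.det_submatrix_equiv_self, Matrix.det_submatrix_equiv_self]
    have : ((Equiv.Perm.sign σ.symm : ℤ) : ℝ) * ((Equiv.Perm.sign σ : ℤ) : ℝ) = 1 := by
      rw [Equiv.Perm.sign_symm]
      rcases Int.units_eq_one_or (Equiv.Perm.sign σ) with h | h <;> rw [h] <;> norm_num
    calc ((Equiv.Perm.sign σ.symm : ℤ) : ℝ) * (M.submatrix Fin.castSucc Fin.succ).det
          * (((Equiv.Perm.sign σ : ℤ) : ℝ) * (M.submatrix Fin.succ Fin.castSucc).det)
        = (((Equiv.Perm.sign σ.symm : ℤ) : ℝ) * ((Equiv.Perm.sign σ : ℤ) : ℝ))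
          * ((M.submatrix Fin.castSucc Fin.succ).det * (M.submatrix Fin.succ Fin.castSucc).det) := by
          ring
      _ = _ := by rw [this, one_mul]
  have := blockDJ A B C D hD
  rw [hbig, h00, h11, hcross] at this
  exact this


lemma det_unitcol {q : ℕ} (N : Matrix (Fin (q + 1)) (Fin (q + 1)) ℝ) (t0 : Fin (q + 1)) (w : ℝ)
    (h : ∀ i, N i (Fin.last q) = if i = t0 then w else 0) :
    N.det = (-1 : ℝ) ^ (t0.1 + q) * w * (N.submatrix t0.succAbove Fin.castSucc).det := by
  rw [Matrix.det_succ_column N (Fin.last q)]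
  rw [Finset.sum_eq_single t0]
  · rw [h t0, if_pos rfl, Fin.succAbove_last]
    simp [Fin.val_last]
  · intro i _ hi
    rw [h i, if_neg hi]
    ring
  · intro hmem
    exact absurd (Finset.mem_univ t0) hmem

lemma neg_one_sq_pow (a : ℕ) : (-1 : ℝ) ^ a * (-1 : ℝ) ^ a = 1 := by
  rw [← pow_add]
  exact Even.neg_one_pow ⟨a, by ring⟩

/-- strict mono gap bound -/
lemma sm_gap {K m : ℕ} (f : Fin K → Fin m) (hf : StrictMono f) :
    ∀ (d : ℕ) (i j : Fin K), j.1 = i.1 + d → (f i).1 + d ≤ (f j).1 := by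
  intro d
  induction d with
  | zero => intro i j hij; have : i = j := by ext; omega
            subst this; omega
  | succ d IH =>
    intro i j hij
    have hj1 : j.1 - 1 < K := by omega
    have h1 := IH i ⟨j.1 - 1, hj1⟩ (by simp; omega)
    have h2 : f ⟨j.1 - 1, hj1⟩ < f j := hf (by simp [Fin.lt_def]; omega)
    have := Fin.lt_def.mp h2
    omega

/-- no gaps implies linear bound -/
lemma no_gap_bound {q m : ℕ} (f : Fin (q + 1) → Fin m)
    (h : ∀ (t : ℕ) (h1 : t + 1 < q + 1) (h2 : t < q + 1),
      (f ⟨t + 1, h1⟩).1 ≤ (f ⟨t, h2⟩).1 + 1) :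
    ∀ i : Fin (q + 1), (f i).1 ≤ (f 0).1 + i.1 := by
  intro i
  obtain ⟨c, hc⟩ : ∃ c, i.1 = c := ⟨i.1, rfl⟩
  induction c generalizing i with
  | zero =>
    have h0 : i = 0 := by ext; simp [hc]
    subst h0; simp
  | succ c IH =>
    have hic := i.isLt
    have hc' : c < q + 1 := by omega
    have h1 := IH ⟨c, hc'⟩ rfl
    have h2 := h c (by omega) hc'
    have h3 : (⟨c + 1, by omega⟩ : Fin (q+1)) = i := by ext; simp [hc]
    rw [h3] at h2
    have h4 : ((⟨c, hc'⟩ : Fin (q+1)) : ℕ) = c := rfl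
    have h5 : ((0 : Fin (q+1)) : ℕ) = 0 := rfl
    omega

/-- a strictly monotone map with extreme displacement is contiguous -/
lemma sm_contig {q m : ℕ} (f : Fin (q + 1) → Fin m) (hf : StrictMono f)
    (h : (f (Fin.last q)).1 = (f 0).1 + q) :
    ∀ i : Fin (q + 1), (f i).1 = (f 0).1 + i.1 := by
  intro i
  have hic := i.isLt
  have h1 := sm_gap f hf i.1 0 i (by simp)
  have h2 := sm_gap f hf (q - i.1) i (Fin.last q)
    (by simp only [Fin.val_last]; omega)
  have h5 : ((0 : Fin (q+1)) : ℕ) = 0 := rfl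
  have h6 : ((Fin.last q : Fin (q+1)) : ℕ) = q := rfl
  omega


lemma app_congr {m n : ℕ} (A : Matrix (Fin m) (Fin n) ℝ) {i i' : Fin m} {j j' : Fin n}
    (h1 : i = i') (h2 : j = j') : A i j = A i' j' := by rw [h1, h2]

lemma ctg_pos {m n : ℕ} (r : ℕ) (hr : 1 ≤ r) (A : Matrix (Fin m) (Fin n) ℝ)
    (hinit : ∀ (k a b : ℕ) (ha : a + k ≤ m) (hb : b + k ≤ n),
      k ≤ r - 1 → (a = 0 ∨ b = 0) → 0 < (ctgSub A k a b ha hb).det)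
    (hctg : ∀ (a b : ℕ) (ha : a + r ≤ m) (hb : b + r ≤ n),
      0 < (ctgSub A r a b ha hb).det) :
    ∀ (N s a b : ℕ) (hs : s ≤ r) (ha : a + s ≤ m) (hb : b + s ≤ n),
      a + b = N → 0 < (ctgSub A s a b ha hb).det := by
  intro N
  induction N using Nat.strong_induction_on with
  | _ N IHN =>
  intro s
  induction s using Nat.strong_induction_on with
  | _ s IHs =>
  intro a b hs ha hb hN
  by_cases hs0 : s = 0
  · subst hs0
    simp [Matrix.det_fin_zero]
  by_cases hsr : s = r
  · subst hsr
    exact hctg a b ha hb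
  by_cases hab : a = 0 ∨ b = 0
  · exact hinit s a b ha hb (by omega) hab
  push_neg at hab
  obtain ⟨ha0, hb0⟩ := hab
  obtain ⟨q, rfl⟩ : ∃ q, s = q + 1 := ⟨s - 1, by omega⟩
  have ha' : (a - 1) + (q + 2) ≤ m := by omega
  have hb' : (b - 1) + (q + 2) ≤ n := by omega
  set M : Matrix (Fin (q + 2)) (Fin (q + 2)) ℝ := ctgSub A (q + 2) (a - 1) (b - 1) ha' hb' with hM
  have eq_mid : M.submatrix (midf q) (midf q)
      = ctgSub A q a b (by omega) (by omega) := by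
    ext i j
    exact app_congr A (Fin.ext (by simp [Fin.ext_iff]; omega)) (Fin.ext (by simp [Fin.ext_iff]; omega))
  have eq_cc : M.submatrix Fin.castSucc Fin.castSucc
      = ctgSub A (q + 1) (a - 1) (b - 1) (by omega) (by omega) := by
    ext i j
    exact app_congr A (Fin.ext (by simp [Fin.ext_iff])) (Fin.ext (by simp [Fin.ext_iff]))
  have eq_ss : M.submatrix Fin.succ Fin.succ = ctgSub A (q + 1) a b ha hb := by
    ext i j
    exact app_congr A (Fin.ext (by simp [Fin.ext_iff]; omega)) (Fin.ext (by simp [Fin.ext_iff]; omega))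
  have eq_cs : M.submatrix Fin.castSucc Fin.succ
      = ctgSub A (q + 1) (a - 1) b (by omega) (by omega) := by
    ext i j
    exact app_congr A (Fin.ext (by simp [Fin.ext_iff])) (Fin.ext (by simp [Fin.ext_iff]; omega))
  have eq_sc : M.submatrix Fin.succ Fin.castSucc
      = ctgSub A (q + 1) a (b - 1) (by omega) (by omega) := by
    ext i j
    exact app_congr A (Fin.ext (by simp [Fin.ext_iff]; omega)) (Fin.ext (by simp [Fin.ext_iff]))
  have hC : 0 < (ctgSub A q a b (by omega) (by omega)).det :=
    IHs q (by omega) a b (by omega) (by omega) (by omega) hN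
  have hE : 0 < M.det := by
    rw [hM]
    exact IHN (N - 2) (by omega) (q + 2) (a - 1) (b - 1) (by omega) ha' hb' (by omega)
  have hD' : 0 < (ctgSub A (q + 1) (a - 1) (b - 1) (by omega : (a-1) + (q+1) ≤ m)
      (by omega : (b-1) + (q+1) ≤ n)).det :=
    IHN (N - 2) (by omega) (q + 1) (a - 1) (b - 1) (by omega) (by omega) (by omega) (by omega)
  have hX : 0 < (ctgSub A (q + 1) (a - 1) b (by omega : (a-1) + (q+1) ≤ m) (by omega)).det :=
    IHN (N - 1) (by omega) (q + 1) (a - 1) b (by omega) (by omega) (by omega) (by omega)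
  have hY : 0 < (ctgSub A (q + 1) a (b - 1) (by omega) (by omega : (b-1) + (q+1) ≤ n)).det :=
    IHN (N - 1) (by omega) (q + 1) a (b - 1) (by omega) (by omega) (by omega) (by omega)
  have key := dj_core M (by rw [eq_mid]; exact ne_of_gt hC)
  rw [eq_mid, eq_cc, eq_ss, eq_cs, eq_sc] at key
  nlinarith [hC, hE, hD', hX, hY, key]


lemma succAbove_val {K : ℕ} (t0 : Fin (K + 1)) (i : Fin K) :
    ((t0.succAbove i) : ℕ) = if i.1 < t0.1 then i.1 else i.1 + 1 := by
  by_cases h : i.1 < t0.1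
  · rw [Fin.succAbove_of_castSucc_lt _ _ (by rw [Fin.lt_def]; simpa using h), if_pos h]
    simp
  · rw [Fin.succAbove_of_le_castSucc _ _ (by rw [Fin.le_def]; simp; omega), if_neg h]
    simp

lemma smono_succ {q : ℕ} : StrictMono (Fin.succ : Fin q → Fin (q + 1)) :=
  fun a b h => Fin.succ_lt_succ_iff.mpr h

lemma smono_castSucc {q : ℕ} : StrictMono (Fin.castSucc : Fin q → Fin (q + 1)) :=
  fun a b h => Fin.castSucc_lt_castSucc_iff.mpr h

lemma gapstep {q m n : ℕ} (A : Matrix (Fin m) (Fin n) ℝ) (g : Fin (q + 1) → Fin n)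
    (hg : StrictMono g)
    (Hsmall : ∀ (f' : Fin q → Fin m) (g' : Fin q → Fin n), StrictMono f' → StrictMono g' →
      0 < (A.submatrix f' g').det)
    (Hbase : ∀ f : Fin (q + 1) → Fin m, StrictMono f →
      (f (Fin.last q)).1 = (f 0).1 + q → 0 < (A.submatrix f g).det) :
    ∀ f : Fin (q + 1) → Fin m, StrictMono f → 0 < (A.submatrix f g).det := by
  suffices H : ∀ (d : ℕ) (f : Fin (q + 1) → Fin m), StrictMono f →
      (f (Fin.last q)).1 ≤ (f 0).1 + q + d → 0 < (A.submatrix f g).det by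
    intro f hf
    exact H (f (Fin.last q)).1 f hf (by omega)
  intro d
  induction d using Nat.strong_induction_on with
  | _ d IH =>
  intro f hf hfd
  by_cases hc : (f (Fin.last q)).1 ≤ (f 0).1 + q
  · apply Hbase f hf
    have := sm_gap f hf q 0 (Fin.last q) (by simp)
    omega
  push_neg at hc
  have hd1 : 1 ≤ d := by omega
  -- find a gap
  have hgap : ∃ (t : ℕ) (h1 : t + 1 < q + 1),
      (f ⟨t, by omega⟩).1 + 2 ≤ (f ⟨t + 1, h1⟩).1 := by
    by_contra hcon
    push_neg at hcon
    have hng := no_gap_bound f (fun t h1 h2 => by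
      have := hcon t h1
      omega)
    have := hng (Fin.last q)
    simp at this
    omega
  obtain ⟨t, h1t, hgt⟩ := hgap
  have h2t : t < q + 1 := by omega
  have htq : t + 1 ≤ q := by omega
  have hpt : (f ⟨t, h2t⟩).1 + 1 < m := by
    have := (f ⟨t + 1, h1t⟩).2
    omega
  set p : Fin m := ⟨(f ⟨t, h2t⟩).1 + 1, hpt⟩ with hp
  set u : Fin (q + 2) → Fin m := fun i =>
    if hle : i.1 ≤ t then f ⟨i.1, by omega⟩
    else if i.1 = t + 1 then p
    else f ⟨i.1 - 1, by omega⟩ with hu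
  have u_le : ∀ (i : Fin (q + 2)) (h : i.1 ≤ t), u i = f ⟨i.1, by omega⟩ := by
    intro i h; simp [hu, h]
  have u_eq : ∀ (i : Fin (q + 2)) (h : i.1 = t + 1), u i = p := by
    intro i h; simp [hu, h]
  have u_gt : ∀ (i : Fin (q + 2)) (h : t + 1 < i.1), u i = f ⟨i.1 - 1, by omega⟩ := by
    intro i h
    have h1 : ¬ i.1 ≤ t := by omega
    have h2 : ¬ i.1 = t + 1 := by omega
    simp [hu, h1, h2]
  have hfm : ∀ (x y : ℕ) (hx : x < q + 1) (hy : y < q + 1), x < y →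
      (f ⟨x, hx⟩).1 < (f ⟨y, hy⟩).1 := by
    intro x y hx hy hxy
    exact Fin.lt_def.mp (hf (by simp [Fin.lt_def]; omega))
  have husm : StrictMono u := by
    intro i j hij
    rw [Fin.lt_def]
    have hij' := Fin.lt_def.mp hij
    rcases Nat.lt_or_ge t i.1 with hti | hti
    · -- i > t
      rcases Nat.eq_or_lt_of_le (Nat.succ_le_of_lt hti) with hieq | hilt
      · -- i = t + 1 : u i = p
        rw [u_eq i hieq.symm]
        have hj : t + 1 < j.1 := by omega
        rw [u_gt j hj]
        have : t < j.1 - 1 ∨ t + 1 = j.1 - 1 ∨ t + 1 ≤ j.1 - 1 := by omega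
        have := hgt
        rcases Nat.eq_or_lt_of_le (show t + 1 ≤ j.1 - 1 by omega) with hjeq | hjlt
        · have : (⟨j.1 - 1, by omega⟩ : Fin (q + 1)) = ⟨t + 1, h1t⟩ := by
            ext; simp; omega
          rw [this]; simp [hp]; omega
        · have h3 := hfm (t + 1) (j.1 - 1) h1t (by omega) (by omega)
          simp [hp]
          omega
      · -- i > t + 1
        rw [u_gt i hilt, u_gt j (by omega)]
        exact hfm _ _ _ _ (by omega)
    · -- i ≤ t
      rw [u_le i hti]
      rcases Nat.lt_or_ge j.1 (t + 1) with hjt | hjt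
      · rw [u_le j (by omega)]
        exact hfm _ _ _ _ (by omega)
      · rcases Nat.eq_or_lt_of_le hjt with hjeq | hjlt
        · rw [u_eq j hjeq.symm]
          have : (f ⟨i.1, by omega⟩).1 ≤ (f ⟨t, h2t⟩).1 := by
            rcases Nat.eq_or_lt_of_le hti with h | h
            · have : (⟨i.1, by omega⟩ : Fin (q + 1)) = ⟨t, h2t⟩ := by ext; simp; omega
              rw [this]
            · exact le_of_lt (hfm _ _ _ _ h)
          simp [hp]; omega
        · rw [u_gt j hjlt]
          exact hfm _ _ _ _ (by omega)
  -- the bordered matrix with a virtual unit column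
  set w : ℝ := (-1 : ℝ) ^ (t + q) with hw
  set M : Matrix (Fin (q + 2)) (Fin (q + 2)) ℝ := Matrix.of fun i j =>
    if hj : j.1 < q + 1 then A (u i) (g ⟨j.1, hj⟩) else (if i.1 = t + 1 then w else 0) with hM
  have Mapp : ∀ (i j : Fin (q + 2)),
      M i j = if hj : j.1 < q + 1 then A (u i) (g ⟨j.1, hj⟩)
        else (if i.1 = t + 1 then w else 0) := fun i j => rfl
  -- u deletions
  have u_del : ∀ i : Fin (q + 1), u ((⟨t + 1, by omega⟩ : Fin (q + 2)).succAbove i) = f i := by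
    intro i
    have hv := succAbove_val (K := q + 1) ⟨t + 1, by omega⟩ i
    by_cases h : i.1 < t + 1
    · rw [if_pos (by simpa using h)] at hv
      rw [u_le _ (by omega), ]
      exact congrArg f (Fin.ext (by simp [hv]))
    · rw [if_neg (by simpa using h)] at hv
      rw [u_gt _ (by omega)]
      exact congrArg f (Fin.ext (by simp [hv]))
  have u_del1 : ∀ i : Fin q, u (Fin.succ ((⟨t, by omega⟩ : Fin (q + 1)).succAbove i)) = f i.succ := by
    intro i
    have hv := succAbove_val (K := q) ⟨t, by omega⟩ i
    by_cases h : i.1 < t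
    · rw [if_pos (by simpa using h)] at hv
      rw [u_le _ (by simp [hv]; omega)]
      exact congrArg f (Fin.ext (by simp [hv]))
    · rw [if_neg (by simpa using h)] at hv
      rw [u_gt _ (by simp [hv]; omega)]
      exact congrArg f (Fin.ext (by simp [hv]))
  have u_del2 : ∀ i : Fin q, u (Fin.castSucc ((⟨t + 1, by omega⟩ : Fin (q + 1)).succAbove i))
      = f i.castSucc := by
    intro i
    have hv := succAbove_val (K := q) ⟨t + 1, by omega⟩ i
    by_cases h : i.1 < t + 1
    · rw [if_pos (by simpa using h)] at hv
      rw [u_le _ (by simp [hv]; omega)]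
      exact congrArg f (Fin.ext (by simp [hv]))
    · rw [if_neg (by simpa using h)] at hv
      rw [u_gt _ (by simp [hv]; omega)]
      exact congrArg f (Fin.ext (by simp [hv]))
  -- identifications of genuine submatrices
  have e_mid : M.submatrix (midf q) (midf q)
      = A.submatrix (fun i : Fin q => u i.succ.castSucc) (fun j : Fin q => g j.succ) := by
    ext i j
    rw [Matrix.submatrix_apply, Mapp, dif_pos (by simp)]
    exact app_congr A rfl (congrArg g (Fin.ext (by simp)))
  have e_cc : M.submatrix Fin.castSucc Fin.castSucc
      = A.submatrix (fun i : Fin (q + 1) => u i.castSucc) g := by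
    ext i j
    rw [Matrix.submatrix_apply, Mapp, dif_pos (by have := j.isLt; simp; omega)]
    exact app_congr A rfl (congrArg g (Fin.ext (by simp)))
  have e_sc : M.submatrix Fin.succ Fin.castSucc
      = A.submatrix (fun i : Fin (q + 1) => u i.succ) g := by
    ext i j
    rw [Matrix.submatrix_apply, Mapp, dif_pos (by have := j.isLt; simp; omega)]
    exact app_congr A rfl (congrArg g (Fin.ext (by simp)))
  -- determinant of M itself
  have hdetM : M.det = (A.submatrix f g).det := by
    have h_col : ∀ i, M i (Fin.last (q + 1)) = if i = (⟨t + 1, by omega⟩ : Fin (q + 2)) then w else 0 := by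
      intro i
      rw [Mapp, dif_neg (by simp)]
      exact if_congr (by rw [Fin.ext_iff]) rfl rfl
    rw [det_unitcol M ⟨t + 1, by omega⟩ w h_col]
    have hrw : M.submatrix (Fin.succAbove ⟨t + 1, by omega⟩) Fin.castSucc = A.submatrix f g := by
      ext i j
      rw [Matrix.submatrix_apply, Mapp, dif_pos (by have := j.isLt; simp; omega)]
      exact app_congr A (u_del i) (congrArg g (Fin.ext (by simp)))
    rw [hrw]
    have hone : (-1 : ℝ) ^ (((⟨t + 1, by omega⟩ : Fin (q + 2)) : ℕ) + (q + 1)) * w = 1 := by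
      have hval : ((⟨t + 1, by omega⟩ : Fin (q + 2)) : ℕ) = t + 1 := rfl
      rw [hval, hw, show (t + 1) + (q + 1) = (t + q) + 2 by ring]
      calc (-1 : ℝ) ^ ((t + q) + 2) * (-1 : ℝ) ^ (t + q)
          = ((-1 : ℝ) ^ (t + q) * (-1 : ℝ) ^ (t + q)) * ((-1 : ℝ) ^ 2) := by
            rw [pow_add]; ring
        _ = 1 := by rw [neg_one_sq_pow]; norm_num
    rw [hone, one_mul]
  -- determinant of the (succ, succ) minor
  have hdetN1 : (M.submatrix Fin.succ Fin.succ).det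
      = (A.submatrix (fun i : Fin q => f i.succ) (fun j : Fin q => g j.succ)).det := by
    have h_col : ∀ i, (M.submatrix Fin.succ Fin.succ) i (Fin.last q)
        = if i = (⟨t, by omega⟩ : Fin (q + 1)) then w else 0 := by
      intro i
      rw [Matrix.submatrix_apply, Fin.succ_last, Mapp, dif_neg (by simp)]
      exact if_congr (by rw [Fin.ext_iff]; simp only [Fin.val_succ]; omega) rfl rfl
    rw [det_unitcol _ ⟨t, by omega⟩ w h_col]
    have hrw : (M.submatrix Fin.succ Fin.succ).submatrix
        (Fin.succAbove ⟨t, by omega⟩) Fin.castSucc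
        = A.submatrix (fun i : Fin q => f i.succ) (fun j : Fin q => g j.succ) := by
      ext i j
      rw [Matrix.submatrix_apply, Matrix.submatrix_apply, Mapp, dif_pos (by simp)]
      exact app_congr A (u_del1 i) (congrArg g (Fin.ext (by simp)))
    rw [hrw]
    have hone : (-1 : ℝ) ^ (((⟨t, by omega⟩ : Fin (q + 1)) : ℕ) + q) * w = 1 := by
      have hval : ((⟨t, by omega⟩ : Fin (q + 1)) : ℕ) = t := rfl
      rw [hval, hw]
      exact neg_one_sq_pow (t + q)
    rw [hone, one_mul]
  -- determinant of the (castSucc, succ) minor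
  have hdetN2 : (M.submatrix Fin.castSucc Fin.succ).det
      = -(A.submatrix (fun i : Fin q => f i.castSucc) (fun j : Fin q => g j.succ)).det := by
    have h_col : ∀ i, (M.submatrix Fin.castSucc Fin.succ) i (Fin.last q)
        = if i = (⟨t + 1, by omega⟩ : Fin (q + 1)) then w else 0 := by
      intro i
      rw [Matrix.submatrix_apply, Fin.succ_last, Mapp, dif_neg (by simp)]
      exact if_congr (by rw [Fin.ext_iff]; simp only [Fin.coe_castSucc]) rfl rfl
    rw [det_unitcol _ ⟨t + 1, by omega⟩ w h_col]
    have hrw : (M.submatrix Fin.castSucc Fin.succ).submatrix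
        (Fin.succAbove ⟨t + 1, by omega⟩) Fin.castSucc
        = A.submatrix (fun i : Fin q => f i.castSucc) (fun j : Fin q => g j.succ) := by
      ext i j
      rw [Matrix.submatrix_apply, Matrix.submatrix_apply, Mapp, dif_pos (by simp)]
      exact app_congr A (u_del2 i) (congrArg g (Fin.ext (by simp)))
    rw [hrw]
    have hone : (-1 : ℝ) ^ (((⟨t + 1, by omega⟩ : Fin (q + 1)) : ℕ) + q) * w = -1 := by
      have hval : ((⟨t + 1, by omega⟩ : Fin (q + 1)) : ℕ) = t + 1 := rfl
      rw [hval, hw, show (t + 1) + q = (t + q) + 1 by ring]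
      calc (-1 : ℝ) ^ ((t + q) + 1) * (-1 : ℝ) ^ (t + q)
          = ((-1 : ℝ) ^ (t + q) * (-1 : ℝ) ^ (t + q)) * (-1 : ℝ) := by
            rw [pow_add]; ring
        _ = -1 := by rw [neg_one_sq_pow]; norm_num
    rw [hone]
    ring
  -- value facts for dispersion bounds
  have hv1 : u (Fin.succ (Fin.last q)) = f (Fin.last q) := by
    rw [u_gt _ (by simp [Fin.val_last]; omega)]
    exact congrArg f (Fin.ext (by simp [Fin.val_last]))
  have hv2 : (f 0).1 + 1 ≤ (u (Fin.succ 0)).1 := by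
    have h1 : (Fin.succ (0 : Fin (q + 1))).1 = 1 := rfl
    rcases Nat.eq_or_lt_of_le (Nat.zero_le t) with ht0 | ht0
    · rw [u_eq _ (by omega), hp]
      have h5 : f ⟨t, h2t⟩ = f 0 := congrArg f (Fin.ext (by simp; omega))
      simp [h5]
    · rw [u_le _ (by omega)]
      exact sm_gap f hf 1 0 _ (by simp)
  have hv3 : u (Fin.castSucc 0) = f 0 := by
    rw [u_le _ (by simp)]
    exact congrArg f (Fin.ext (by simp))
  have hv4 : (u (Fin.castSucc (Fin.last q))).1 + 1 ≤ (f (Fin.last q)).1 := by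
    have hlast : (Fin.castSucc (Fin.last q)).1 = q := by simp [Fin.val_last]
    rcases Nat.eq_or_lt_of_le htq with hq | hq
    · -- q = t + 1
      rw [u_eq _ (by omega)]
      have : f ⟨t + 1, h1t⟩ = f (Fin.last q) := congrArg f (Fin.ext (by simp [Fin.val_last]; omega))
      rw [← this]
      simp [hp]
      omega
    · -- t + 1 < q
      rw [u_gt _ (by omega)]
      have h3 := hfm (q - 1) q (by omega) (by omega) (by omega)
      have : f ⟨q, by omega⟩ = f (Fin.last q) := congrArg f (Fin.ext (by simp [Fin.val_last]))
      rw [this] at h3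
      have : (⟨(Fin.castSucc (Fin.last q)).1 - 1, by omega⟩ : Fin (q + 1)) = ⟨q - 1, by omega⟩ :=
        Fin.ext (by simp [Fin.val_last])
      rw [this]
      omega
  -- positivity of the small minors
  have hQ1 := Hsmall (fun i : Fin q => f i.succ) (fun j : Fin q => g j.succ)
    (hf.comp smono_succ) (hg.comp smono_succ)
  have hQ2 := Hsmall (fun i : Fin q => f i.castSucc) (fun j : Fin q => g j.succ)
    (hf.comp smono_castSucc) (hg.comp smono_succ)
  have hCmid := Hsmall (fun i : Fin q => u i.succ.castSucc) (fun j : Fin q => g j.succ)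
    (husm.comp (smono_castSucc.comp smono_succ)) (hg.comp smono_succ)
  -- positivity of the two smaller-dispersion minors
  have hP1 : 0 < (A.submatrix (fun i : Fin (q + 1) => u i.succ) g).det := by
    apply IH (d - 1) (by omega) _ (husm.comp smono_succ)
    show (u (Fin.succ (Fin.last q))).1 ≤ (u (Fin.succ 0)).1 + q + (d - 1)
    rw [hv1]
    omega
  have hP2 : 0 < (A.submatrix (fun i : Fin (q + 1) => u i.castSucc) g).det := by
    apply IH (d - 1) (by omega) _ (husm.comp smono_castSucc)
    show (u (Fin.castSucc (Fin.last q))).1 ≤ (u (Fin.castSucc 0)).1 + q + (d - 1)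
    rw [hv3]
    omega
  -- the Desnanot–Jacobi identity
  have key := dj_core M (by rw [e_mid]; exact ne_of_gt hCmid)
  rw [hdetM, e_mid, e_cc, e_sc, hdetN1, hdetN2] at key
  nlinarith [key, hCmid, hQ1, hQ2, hP1, hP2]


lemma mainB {m n : ℕ} (r : ℕ) (hr : 1 ≤ r) (A : Matrix (Fin m) (Fin n) ℝ)
    (hinit : ∀ (k a b : ℕ) (ha : a + k ≤ m) (hb : b + k ≤ n),
      k ≤ r - 1 → (a = 0 ∨ b = 0) → 0 < (ctgSub A k a b ha hb).det)
    (hctg : ∀ (a b : ℕ) (ha : a + r ≤ m) (hb : b + r ≤ n),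
      0 < (ctgSub A r a b ha hb).det) :
    ∀ (k : ℕ), k ≤ r → ∀ (f : Fin k → Fin m) (g : Fin k → Fin n),
      StrictMono f → StrictMono g → 0 < (A.submatrix f g).det := by
  intro k
  induction k using Nat.strong_induction_on with
  | _ k IH =>
  intro hk f g hf hg
  by_cases hk0 : k = 0
  · subst hk0
    rw [Matrix.det_fin_zero]
    norm_num
  obtain ⟨q, rfl⟩ : ∃ q, k = q + 1 := ⟨k - 1, by omega⟩
  have Hsmall : ∀ (f' : Fin q → Fin m) (g' : Fin q → Fin n), StrictMono f' → StrictMono g' →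
      0 < (A.submatrix f' g').det :=
    fun f' g' hf' hg' => IH q (by omega) (by omega) f' g' hf' hg'
  have HsmallT : ∀ (f' : Fin q → Fin n) (g' : Fin q → Fin m), StrictMono f' → StrictMono g' →
      0 < (Aᵀ.submatrix f' g').det := by
    intro f' g' hf' hg'
    rw [← Matrix.transpose_submatrix, Matrix.det_transpose]
    exact Hsmall g' f' hg' hf'
  have step1 : ∀ (f : Fin (q + 1) → Fin m), StrictMono f →
      (f (Fin.last q)).1 = (f 0).1 + q →
      ∀ (g : Fin (q + 1) → Fin n), StrictMono g → 0 < (A.submatrix f g).det := by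
    intro f hf hfc g hg
    have hfa := sm_contig f hf hfc
    have hma : (f 0).1 + (q + 1) ≤ m := by
      have h2 := (f (Fin.last q)).2
      have h3 := hfa (Fin.last q)
      simp only [Fin.val_last] at h3
      omega
    have Hbase : ∀ c : Fin (q + 1) → Fin n, StrictMono c →
        (c (Fin.last q)).1 = (c 0).1 + q → 0 < (Aᵀ.submatrix c f).det := by
      intro c hc hcc
      rw [← Matrix.transpose_submatrix, Matrix.det_transpose]
      have hca := sm_contig c hc hcc
      have hnb : (c 0).1 + (q + 1) ≤ n := by
        have h2 := (c (Fin.last q)).2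
        have h3 := hca (Fin.last q)
        simp only [Fin.val_last] at h3
        omega
      have heq : A.submatrix f c = ctgSub A (q + 1) (f 0).1 (c 0).1 hma hnb := by
        ext i j
        exact app_congr A (Fin.ext (by simpa using hfa i)) (Fin.ext (by simpa using hca j))
      rw [heq]
      exact ctg_pos r hr A hinit hctg ((f 0).1 + (c 0).1) (q + 1) (f 0).1 (c 0).1
        (by omega) hma hnb rfl
    have hstep := gapstep Aᵀ f hf HsmallT Hbase g hg
    rw [← Matrix.transpose_submatrix, Matrix.det_transpose] at hstep
    exact hstep
  exact gapstep A g hg Hsmall (fun f' hf' hd => step1 f' hf' hd g hg) f hf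

end DJaux

/-- If all initial minors of `A` of size at most `r-1` are positive
and all contiguous minors of `A` of size `r` are positive, then `A` is TP_r. -/
theorem initial_and_contiguous_minors_pos_imp_TPr {m n : ℕ}
    (r : ℕ) (hr : 1 ≤ r) (A : Matrix (Fin m) (Fin n) ℝ)
    (hinit : ∀ (k a b : ℕ) (ha : a + k ≤ m) (hb : b + k ≤ n),
      k ≤ r - 1 → (a = 0 ∨ b = 0) → 0 < (ctgSub A k a b ha hb).det)
    (hctg : ∀ (a b : ℕ) (ha : a + r ≤ m) (hb : b + r ≤ n),
      0 < (ctgSub A r a b ha hb).det) :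
    IsTPr A r := by
  intro k hk f g hf hg
  exact DJaux.mainB r hr A hinit hctg k hk f g hf hg
end

section
/- For every m, n ≥ 1 and every r with 1 ≤ r ≤ min(m,n), the set of m-by-n real matrices that are totally positive of order r (TP_r) is dense in the set of m-by-n real matrices that are totally nonnegative of order r (TN_r): for every TN_r matrix A and every ε > 0 there exists a TP_r matrix B with |a_{ij} − b_{ij}| < ε for all entries. -/
open Matrix Finset

namespace TPDense

instance {k N : ℕ} : DecidablePred (StrictMono : (Fin k → Fin N) → Prop) := fun f =>
  decidable_of_iff (∀ a b : Fin k, a < b → f a < f b) Iff.rfl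

/-- expansion of det of a product by rows -/
theorem det_mul_expand {k N : ℕ} (P : Matrix (Fin k) (Fin N) ℝ) (Q : Matrix (Fin N) (Fin k) ℝ) :
    (P * Q).det = ∑ φ : Fin k → Fin N, (∏ i, P i (φ i)) * (Q.submatrix φ id).det := by
  have harg : (fun i : Fin k => (P * Q) i) = fun i : Fin k => ∑ x : Fin N, P i x • Q x := by
    funext i
    funext j
    simp [Matrix.mul_apply, Finset.sum_apply]
  have h1 : (P * Q).det
      = Matrix.detRowAlternating.toMultilinearMap (fun i : Fin k => ∑ x : Fin N, P i x • Q x) := by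
    rw [← harg]
    rfl
  rw [h1, MultilinearMap.map_sum]
  refine Finset.sum_congr rfl fun φ _ => ?_
  rw [MultilinearMap.map_smul_univ]
  rfl

theorem cauchy_binet {k N : ℕ} (P : Matrix (Fin k) (Fin N) ℝ) (Q : Matrix (Fin N) (Fin k) ℝ) :
    (P * Q).det = ∑ γ ∈ Finset.univ.filter (fun γ : Fin k → Fin N => StrictMono γ),
      (P.submatrix id γ).det * (Q.submatrix γ id).det := by
  classical
  rw [det_mul_expand]
  -- drop non-injective φ
  rw [← Finset.sum_filter_of_ne (p := fun φ : Fin k → Fin N => Function.Injective φ)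
    (by
      intro φ _ hne
      by_contra hinj
      apply hne
      simp only [Function.Injective] at hinj
      push_neg at hinj
      obtain ⟨a, b, hab, hne'⟩ := hinj
      have : (Q.submatrix φ id).det = 0 := by
        apply Matrix.det_zero_of_row_eq hne'
        funext j
        simp [hab]
      rw [this, mul_zero])]
  -- reindex by subtypes
  rw [Finset.sum_subtype (p := fun φ : Fin k → Fin N => Function.Injective φ)
    (Finset.univ.filter (fun φ : Fin k → Fin N => Function.Injective φ))
    (by intro x; simp) (fun φ => (∏ i, P i (φ i)) * (Q.submatrix φ id).det)]
  rw [Finset.sum_subtype (p := fun γ : Fin k → Fin N => StrictMono γ)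
    (Finset.univ.filter (fun γ : Fin k → Fin N => StrictMono γ))
    (by intro x; simp) (fun γ => (P.submatrix id γ).det * (Q.submatrix γ id).det)]
  -- bijection (γ, σ) ↦ γ ∘ σ
  have key : ∀ (x : {γ : Fin k → Fin N // StrictMono γ} × Equiv.Perm (Fin k)),
      Function.Injective (x.1.1 ∘ x.2) := fun x =>
    (x.1.2.injective).comp x.2.injective
  have hbij : Function.Bijective
      (fun x : {γ : Fin k → Fin N // StrictMono γ} × Equiv.Perm (Fin k) =>
        (⟨x.1.1 ∘ x.2, key x⟩ : {φ : Fin k → Fin N // Function.Injective φ})) := by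
    constructor
    · rintro ⟨⟨γ₁, h₁⟩, σ₁⟩ ⟨⟨γ₂, h₂⟩, σ₂⟩ h
      simp only [Subtype.mk.injEq] at h
      have hr : Set.range γ₁ = Set.range γ₂ := by
        have e1 : Set.range (γ₁ ∘ σ₁) = Set.range γ₁ := by
          rw [Set.range_comp, σ₁.range_eq_univ, Set.image_univ]
        have e2 : Set.range (γ₂ ∘ σ₂) = Set.range γ₂ := by
          rw [Set.range_comp, σ₂.range_eq_univ, Set.image_univ]
        rw [← e1, ← e2, h]
      haveI : WellFoundedLT (Fin k) := inferInstance
      have hγ : γ₁ = γ₂ := (h₁.range_inj h₂).1 hr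
      subst hγ
      have hσ : σ₁ = σ₂ := by
        ext i
        have := congrFun h i
        simp only [Function.comp_apply] at this
        exact congrArg Fin.val (h₁.injective this)
      simp [hσ]
    · rintro ⟨φ, hφ⟩
      set s : Finset (Fin N) := Finset.univ.image φ with hs
      have hcard : s.card = k := by
        rw [hs, Finset.card_image_of_injective _ hφ, Finset.card_univ, Fintype.card_fin]
      set γ : Fin k → Fin N := fun i => s.orderEmbOfFin hcard i with hγ
      have hγmono : StrictMono γ := (s.orderEmbOfFin hcard).strictMono
      have hmem : ∀ i, φ i ∈ s := fun i => Finset.mem_image_of_mem _ (Finset.mem_univ i)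
      set ψ : Fin k → Fin k := fun i => (s.orderIsoOfFin hcard).symm ⟨φ i, hmem i⟩ with hψ
      have hψinj : Function.Injective ψ := by
        intro i j hij
        apply hφ
        have := (s.orderIsoOfFin hcard).symm.injective hij
        exact congrArg Subtype.val this
      have hψbij := (Finite.injective_iff_bijective).1 hψinj
      refine ⟨⟨⟨γ, hγmono⟩, Equiv.ofBijective ψ hψbij⟩, ?_⟩
      apply Subtype.ext
      funext i
      show (s.orderEmbOfFin hcard) (ψ i) = φ i
      have h2 : (s.orderEmbOfFin hcard) (ψ i) = ((s.orderIsoOfFin hcard) (ψ i) : Fin N) := by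
        rw [Finset.coe_orderIsoOfFin_apply]
      rw [h2, hψ]
      simp
  rw [← Fintype.sum_bijective _ hbij _ _ (fun _ => rfl)]
  -- now sum over pairs
  rw [Fintype.sum_prod_type]
  refine Finset.sum_congr rfl fun γ _ => ?_
  -- inner: ∑ σ, (∏ i, P i (γ (σ i))) * det (Q.submatrix (γ∘σ) id) = det P_γ * det Q_γ
  have hsub : ∀ σ : Equiv.Perm (Fin k),
      (Q.submatrix (γ.1 ∘ σ) id) = (Q.submatrix γ.1 id).submatrix σ id := by
    intro σ; rfl
  have hdet : (P.submatrix id γ.1).det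
      = ∑ σ : Equiv.Perm (Fin k), (Equiv.Perm.sign σ : ℝ) * ∏ i, P i (γ.1 (σ i)) := by
    rw [← Matrix.det_transpose, Matrix.det_apply']
    refine Finset.sum_congr rfl fun σ _ => ?_
    congr 1
  calc ∑ σ : Equiv.Perm (Fin k),
        (∏ i, P i (γ.1 (σ i))) * (Q.submatrix (γ.1 ∘ σ) id).det
      = ∑ σ : Equiv.Perm (Fin k),
        ((Equiv.Perm.sign σ : ℝ) * ∏ i, P i (γ.1 (σ i))) * (Q.submatrix γ.1 id).det := by
        refine Finset.sum_congr rfl fun σ _ => ?_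
        rw [hsub, Matrix.det_permute]
        push_cast
        ring
    _ = (P.submatrix id γ.1).det * (Q.submatrix γ.1 id).det := by
        rw [hdet, Finset.sum_mul]


/-! ### The kernel `q^((i-j)^2)` -/

/-- squared distance of two naturals -/
def dd (a b : ℕ) : ℕ := (((a : ℤ) - b).natAbs) ^ 2

noncomputable def ker (q : ℝ) (M : ℕ) : Matrix (Fin M) (Fin M) ℝ :=
  Matrix.of fun i j => q ^ dd i.1 j.1

lemma dd_cast (a b : ℕ) : (dd a b : ℤ) = ((a : ℤ) - b) ^ 2 := by
  unfold dd
  rw [Nat.cast_pow, Int.natAbs_sq]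

/-- strict rearrangement for strictly monotone sequences -/
lemma rearrange {k : ℕ} (a b : Fin k → ℕ) (ha : StrictMono a) (hb : StrictMono b)
    (σ : Equiv.Perm (Fin k)) (hσ : σ ≠ 1) :
    ∑ i, a i * b (σ i) < ∑ i, a i * b i := by
  have hmv : Monovary a b := by
    intro i j hb'
    exact ha.monotone ((hb.lt_iff_lt).1 hb').le
  have h2 : ¬ Monovary a (b ∘ σ) := by
    intro hM
    apply hσ
    have hsm : StrictMono σ := by
      intro i j hij
      rcases lt_trichotomy (σ i) (σ j) with h | h | h
      · exact h
      · exact absurd (σ.injective h) hij.ne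
      · exfalso
        have : a j ≤ a i := hM (by simpa using hb.lt_iff_lt.2 h)
        exact absurd (ha.lt_iff_lt.1 (lt_of_le_of_lt this (ha hij))) (lt_irrefl j)
    haveI : WellFoundedLT (Fin k) := inferInstance
    have : (σ : Fin k → Fin k) = id := (hsm.range_inj strictMono_id).1
      (by rw [σ.range_eq_univ]; exact (Set.range_id).symm)
    ext i
    exact congrArg Fin.val (congrFun this i)
  have := (Monovary.sum_smul_comp_perm_lt_sum_smul_iff (σ := σ) hmv).2 h2
  simpa [smul_eq_mul] using this

lemma ker_minor_pos {M k : ℕ} {q : ℝ} (h0 : 0 < q) (h1 : q * (k.factorial : ℝ) < 1)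
    (f : Fin k → Fin M) (g : Fin k → Fin M) (hf : StrictMono f) (hg : StrictMono g) :
    0 < ((ker q M).submatrix f g).det := by
  classical
  have hq1 : q < 1 := by
    have h2 : (1 : ℝ) ≤ (k.factorial : ℝ) := by exact_mod_cast Nat.one_le_iff_ne_zero.2 k.factorial_ne_zero
    nlinarith
  set E : Equiv.Perm (Fin k) → ℕ := fun σ => ∑ i, dd (f (σ i)).1 (g i).1 with hE
  have hterm : ∀ σ : Equiv.Perm (Fin k),
      (∏ i, ((ker q M).submatrix f g) (σ i) i) = q ^ E σ := by
    intro σ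
    rw [hE]
    exact Finset.prod_pow_eq_pow_sum Finset.univ _ q
  have key : ∀ τ : Equiv.Perm (Fin k),
      ((E τ : ℤ))
        = ∑ i, (((f i).1 : ℤ)) ^ 2 + ∑ i, (((g i).1 : ℤ)) ^ 2
          - 2 * ∑ i, (((f (τ i)).1 : ℤ) * ((g i).1 : ℤ)) := by
    intro τ
    have h1 : (∑ i, (((f (τ i)).1 : ℤ)) ^ 2) = ∑ i, (((f i).1 : ℤ)) ^ 2 :=
      Equiv.sum_comp τ (fun i => (((f i).1 : ℤ)) ^ 2)
    have h2 : ∀ i : Fin k, ((dd (f (τ i)).1 (g i).1 : ℤ))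
        = (((f (τ i)).1 : ℤ)) ^ 2 + (((g i).1 : ℤ)) ^ 2
          - 2 * ((((f (τ i)).1 : ℤ)) * (((g i).1 : ℤ))) := fun i => by rw [dd_cast]; ring
    rw [hE]
    rw [Nat.cast_sum]
    simp_rw [h2]
    rw [Finset.sum_sub_distrib, Finset.sum_add_distrib, ← Finset.mul_sum, h1]
  -- E 1 is strictly minimal
  have hEmin : ∀ σ : Equiv.Perm (Fin k), σ ≠ 1 → E 1 + 1 ≤ E σ := by
    intro σ hσ
    have hre : ∑ i, (g i).1 * (f (σ i)).1 < ∑ i, (g i).1 * (f i).1 :=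
      rearrange (fun i => (g i).1) (fun i => (f i).1)
        (fun i j hij => hg hij) (fun i j hij => hf hij) σ hσ
    have hZ : (E 1 : ℤ) < (E σ : ℤ) := by
      rw [key σ, key 1]
      simp only [Equiv.Perm.one_apply]
      have hre' : (∑ i, (((f (σ i)).1 : ℤ) * ((g i).1 : ℤ)))
          < ∑ i, (((f i).1 : ℤ) * ((g i).1 : ℤ)) := by
        have := hre
        zify at this
        calc (∑ i, (((f (σ i)).1 : ℤ) * ((g i).1 : ℤ)))
            = ∑ i, (((g i).1 : ℤ) * ((f (σ i)).1 : ℤ)) := by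
              exact Finset.sum_congr rfl fun i _ => mul_comm _ _
          _ < ∑ i, (((g i).1 : ℤ) * ((f i).1 : ℤ)) := by exact_mod_cast this
          _ = ∑ i, (((f i).1 : ℤ) * ((g i).1 : ℤ)) := by
              exact Finset.sum_congr rfl fun i _ => mul_comm _ _
      linarith
    omega
  -- determinant expansion
  rw [Matrix.det_apply']
  have hsum : ∀ σ : Equiv.Perm (Fin k),
      (Equiv.Perm.sign σ : ℝ) * (∏ i, ((ker q M).submatrix f g) (σ i) i)
        = (Equiv.Perm.sign σ : ℝ) * q ^ E σ := fun σ => by rw [hterm]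
  rw [Finset.sum_congr rfl (fun σ _ => hsum σ)]
  rw [← Finset.add_sum_erase _ _ (Finset.mem_univ (1 : Equiv.Perm (Fin k)))]
  have hsign1 : ((Equiv.Perm.sign (1 : Equiv.Perm (Fin k)) : ℤ) : ℝ) = 1 := by simp
  rw [hsign1, one_mul]
  set S := ∑ σ ∈ Finset.univ.erase (1 : Equiv.Perm (Fin k)), (Equiv.Perm.sign σ : ℝ) * q ^ E σ
    with hS
  have hq0 : (0:ℝ) < q ^ E 1 := pow_pos h0 _
  have habs : |S| ≤ (k.factorial : ℝ) * q * q ^ E 1 := by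
    calc |S| ≤ ∑ σ ∈ Finset.univ.erase (1 : Equiv.Perm (Fin k)),
          |(Equiv.Perm.sign σ : ℝ) * q ^ E σ| := Finset.abs_sum_le_sum_abs _ _
      _ ≤ ∑ σ ∈ Finset.univ.erase (1 : Equiv.Perm (Fin k)), q * q ^ E 1 := by
          apply Finset.sum_le_sum
          intro σ hσ
          have hσ1 : σ ≠ 1 := (Finset.mem_erase.1 hσ).1
          have h4 : |(Equiv.Perm.sign σ : ℝ)| = 1 := by
            rcases Int.units_eq_one_or (Equiv.Perm.sign σ) with h | h <;> rw [h] <;> norm_num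
          rw [abs_mul, h4, one_mul, abs_of_nonneg (pow_pos h0 _).le]
          calc q ^ E σ ≤ q ^ (E 1 + 1) :=
                pow_le_pow_of_le_one h0.le hq1.le (hEmin σ hσ1)
            _ = q * q ^ E 1 := by rw [pow_succ, mul_comm]
      _ ≤ (k.factorial : ℝ) * q * q ^ E 1 := by
          rw [Finset.sum_const, nsmul_eq_mul]
          have hcard : ((Finset.univ.erase (1 : Equiv.Perm (Fin k))).card : ℝ)
              ≤ (k.factorial : ℝ) := by
            have := Finset.card_erase_le (s := (Finset.univ : Finset (Equiv.Perm (Fin k))))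
              (a := (1 : Equiv.Perm (Fin k)))
            have h5 : (Finset.univ : Finset (Equiv.Perm (Fin k))).card = k.factorial := by
              rw [Finset.card_univ, Fintype.card_perm, Fintype.card_fin]
            exact_mod_cast le_trans this (le_of_eq h5)
          have : (0:ℝ) ≤ q * q ^ E 1 := by positivity
          nlinarith
  have h6 : -((k.factorial : ℝ) * q * q ^ E 1) ≤ S := neg_le_of_abs_le habs
  nlinarith

/-! ### The padded block matrix -/

def tilde {m n : ℕ} (A : Matrix (Fin m) (Fin n) ℝ) (r : ℕ) :
    Matrix (Fin (m + r)) (Fin (n + r)) ℝ :=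
  Matrix.of fun i j =>
    if hi : i.1 < m then
      (if hj : j.1 < n then A ⟨i.1, hi⟩ ⟨j.1, hj⟩ else 0)
    else
      (if j.1 < n then 0 else (if i.1 - m = j.1 - n then 1 else 0))

lemma tilde_AA {m n : ℕ} (A : Matrix (Fin m) (Fin n) ℝ) (r : ℕ) (i : Fin (m + r))
    (j : Fin (n + r)) (hi : i.1 < m) (hj : j.1 < n) :
    tilde A r i j = A ⟨i.1, hi⟩ ⟨j.1, hj⟩ := by
  simp [tilde, hi, hj]

lemma tilde_AI {m n : ℕ} (A : Matrix (Fin m) (Fin n) ℝ) (r : ℕ) (i : Fin (m + r))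
    (j : Fin (n + r)) (hi : i.1 < m) (hj : ¬ j.1 < n) :
    tilde A r i j = 0 := by
  simp [tilde, hi, hj]

lemma tilde_IA {m n : ℕ} (A : Matrix (Fin m) (Fin n) ℝ) (r : ℕ) (i : Fin (m + r))
    (j : Fin (n + r)) (hi : ¬ i.1 < m) (hj : j.1 < n) :
    tilde A r i j = 0 := by
  simp [tilde, hi, hj]

lemma tilde_II {m n : ℕ} (A : Matrix (Fin m) (Fin n) ℝ) (r : ℕ) (i : Fin (m + r))
    (j : Fin (n + r)) (hi : ¬ i.1 < m) (hj : ¬ j.1 < n) :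
    tilde A r i j = (if i.1 - m = j.1 - n then 1 else 0) := by
  simp [tilde, hi, hj]

/-- an initial-segment description of a monotone down-closed predicate on `Fin k` -/
lemma initial_seg {k M : ℕ} (f : Fin k → Fin M) (hf : StrictMono f) (m : ℕ) :
    ∀ i : Fin k, (f i).1 < m ↔
      i.1 < (Finset.univ.filter (fun i : Fin k => (f i).1 < m)).card := by
  classical
  set s := Finset.univ.filter (fun i : Fin k => (f i).1 < m) with hs
  have hdc : ∀ i j : Fin k, i ≤ j → (f j).1 < m → (f i).1 < m := by
    intro i j hij hj
    exact lt_of_le_of_lt (by exact_mod_cast (hf.monotone hij)) hj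
  intro i
  constructor
  · intro hi
    have hsub : Finset.Iic i ⊆ s := by
      intro j hj
      rw [hs, Finset.mem_filter]
      exact ⟨Finset.mem_univ _, hdc j i (Finset.mem_Iic.1 hj) hi⟩
    have := Finset.card_le_card hsub
    rw [Fin.card_Iic] at this
    omega
  · intro hi
    by_contra hni
    have hsub : s ⊆ Finset.Iio i := by
      intro j hj
      rw [hs, Finset.mem_filter] at hj
      rw [Finset.mem_Iio]
      by_contra hji
      exact hni (hdc i j (le_of_not_gt hji) hj.2)
    have := Finset.card_le_card hsub
    rw [Fin.card_Iio] at this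
    omega

/-- pigeonhole vanishing determinant -/
lemma det_zero_pigeon {k : ℕ} (M : Matrix (Fin k) (Fin k) ℝ) (P Q : Fin k → Prop)
    [DecidablePred P] [DecidablePred Q]
    (hcard : (Finset.univ.filter P).card < (Finset.univ.filter Q).card)
    (hzero : ∀ i j, ¬ P i → Q j → M i j = 0) : M.det = 0 := by
  rw [Matrix.det_apply']
  apply Finset.sum_eq_zero
  intro σ _
  have : ∃ j, Q j ∧ ¬ P (σ j) := by
    by_contra hc
    push_neg at hc
    have hsub : (Finset.univ.filter Q).image σ ⊆ Finset.univ.filter P := by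
      intro x hx
      rw [Finset.mem_image] at hx
      obtain ⟨j, hj, rfl⟩ := hx
      rw [Finset.mem_filter] at hj ⊢
      exact ⟨Finset.mem_univ _, hc j hj.2⟩
    have := Finset.card_le_card hsub
    rw [Finset.card_image_of_injective _ σ.injective] at this
    omega
  obtain ⟨j, hQ, hP⟩ := this
  have hprod : (∏ i, M (σ i) i) = 0 :=
    Finset.prod_eq_zero (Finset.mem_univ j) (hzero _ _ hP hQ)
  rw [hprod, mul_zero]

/-- determinant of a submatrix of the identity, for strictly monotone maps, is 0 or 1 -/
lemma det_submatrix_one_nonneg {s R : ℕ} (f g : Fin s → Fin R) (hf : StrictMono f)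
    (hg : StrictMono g) :
    0 ≤ ((1 : Matrix (Fin R) (Fin R) ℝ).submatrix f g).det := by
  classical
  by_cases hfg : Finset.univ.image f = Finset.univ.image g
  · have hrange : Set.range f = Set.range g := by
      have h1 := congrArg (fun t : Finset (Fin R) => (t : Set (Fin R))) hfg
      simp only [Finset.coe_image, Finset.coe_univ, Set.image_univ] at h1
      exact h1
    haveI : WellFoundedLT (Fin s) := inferInstance
    have : f = g := (hf.range_inj hg).1 hrange
    subst this
    have : ((1 : Matrix (Fin R) (Fin R) ℝ).submatrix f f) = 1 := by
      ext i j
      by_cases hij : i = j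
      · subst hij; simp [Matrix.one_apply]
      · have : f i ≠ f j := fun h => hij (hf.injective h)
        simp [Matrix.one_apply, hij, this]
    rw [this, Matrix.det_one]
    norm_num
  · have hns : ¬ Finset.univ.image f ⊆ Finset.univ.image g := by
      intro hsub
      apply hfg
      apply Finset.eq_of_subset_of_card_le hsub
      rw [Finset.card_image_of_injective _ hg.injective,
        Finset.card_image_of_injective _ hf.injective]
    obtain ⟨x, hxf, hxg⟩ := Finset.not_subset.1 hns
    rw [Finset.mem_image] at hxf
    obtain ⟨i, _, rfl⟩ := hxf
    have hrow : ∀ j, ((1 : Matrix (Fin R) (Fin R) ℝ).submatrix f g) i j = 0 := by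
      intro j
      have : f i ≠ g j := by
        intro h
        exact hxg (h ▸ Finset.mem_image_of_mem g (Finset.mem_univ j))
      simp [Matrix.one_apply, this]
    rw [Matrix.det_eq_zero_of_row_eq_zero i hrow]


lemma tilde_TN {m n r : ℕ} (A : Matrix (Fin m) (Fin n) ℝ)
    (hA : ∀ (k : ℕ), k ≤ r → ∀ (f : Fin k → Fin m) (g : Fin k → Fin n),
      StrictMono f → StrictMono g → 0 ≤ (A.submatrix f g).det)
    {k : ℕ} (hk : k ≤ r) (f : Fin k → Fin (m + r)) (g : Fin k → Fin (n + r))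
    (hf : StrictMono f) (hg : StrictMono g) :
    0 ≤ ((tilde A r).submatrix f g).det := by
  classical
  set p := (Finset.univ.filter (fun i : Fin k => (f i).1 < m)).card with hp
  set q := (Finset.univ.filter (fun j : Fin k => (g j).1 < n)).card with hq
  have hfi := initial_seg f hf m
  have hgi := initial_seg g hg n
  have hpk : p ≤ k := by
    rw [hp]
    calc (Finset.univ.filter (fun i : Fin k => (f i).1 < m)).card
        ≤ (Finset.univ : Finset (Fin k)).card := Finset.card_filter_le _ _
      _ = k := by simp
  have hqk : q ≤ k := by
    rw [hq]
    calc (Finset.univ.filter (fun j : Fin k => (g j).1 < n)).card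
        ≤ (Finset.univ : Finset (Fin k)).card := Finset.card_filter_le _ _
      _ = k := by simp
  rcases lt_trichotomy p q with h | h | h
  · -- p < q : determinant vanishes
    rw [det_zero_pigeon ((tilde A r).submatrix f g) (fun i => (f i).1 < m)
      (fun j => (g j).1 < n) h
      (fun i j hP hQ => tilde_IA A r (f i) (g j) hP hQ)]
  · -- p = q : block triangular
    have hkp : p + (k - p) = k := by omega
    set e : Fin p ⊕ Fin (k - p) ≃ Fin k := finSumFinEquiv.trans (finCongr hkp) with he
    have he1 : ∀ i : Fin p, (e (Sum.inl i)).1 = i.1 := by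
      intro i; simp [he, finCongr_apply]
    have he2 : ∀ j : Fin (k - p), (e (Sum.inr j)).1 = p + j.1 := by
      intro j; simp [he, finCongr_apply]
    have hf1b : ∀ i : Fin p, (f (e (Sum.inl i))).1 < m := by
      intro i
      rw [hfi]
      rw [he1]
      exact lt_of_lt_of_le i.2 le_rfl
    have hf2b : ∀ i : Fin (k - p), ¬ (f (e (Sum.inr i))).1 < m := by
      intro i hlt
      rw [hfi, he2] at hlt
      omega
    have hg1b : ∀ j : Fin p, (g (e (Sum.inl j))).1 < n := by
      intro j
      rw [hgi]
      rw [he1]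
      omega
    have hg2b : ∀ j : Fin (k - p), ¬ (g (e (Sum.inr j))).1 < n := by
      intro j hlt
      rw [hgi, he2] at hlt
      omega
    set f₁ : Fin p → Fin m := fun i => ⟨(f (e (Sum.inl i))).1, hf1b i⟩ with hf₁
    set g₁ : Fin p → Fin n := fun j => ⟨(g (e (Sum.inl j))).1, hg1b j⟩ with hg₁
    have hf2r : ∀ i : Fin (k - p), (f (e (Sum.inr i))).1 - m < r := by
      intro i
      have h1 := (f (e (Sum.inr i))).2
      have h2 := hf2b i
      omega
    have hg2r : ∀ j : Fin (k - p), (g (e (Sum.inr j))).1 - n < r := by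
      intro j
      have h1 := (g (e (Sum.inr j))).2
      have h2 := hg2b j
      omega
    set f₂ : Fin (k - p) → Fin r := fun i => ⟨(f (e (Sum.inr i))).1 - m, hf2r i⟩ with hf₂
    set g₂ : Fin (k - p) → Fin r := fun j => ⟨(g (e (Sum.inr j))).1 - n, hg2r j⟩ with hg₂
    have hmono1 : StrictMono f₁ := by
      intro i j hij
      have : e (Sum.inl i) < e (Sum.inl j) := by
        rw [Fin.lt_def, he1, he1]; exact hij
      exact hf this
    have hmono2 : StrictMono g₁ := by
      intro i j hij
      have : e (Sum.inl i) < e (Sum.inl j) := by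
        rw [Fin.lt_def, he1, he1]; exact hij
      exact hg this
    have hmono3 : StrictMono f₂ := by
      intro i j hij
      have h1 : e (Sum.inr i) < e (Sum.inr j) := by
        rw [Fin.lt_def, he2, he2]
        exact Nat.add_lt_add_left hij p
      have h2 := hf h1
      rw [Fin.lt_def] at h2 ⊢
      have := hf2b i
      simp only [hf₂]
      omega
    have hmono4 : StrictMono g₂ := by
      intro i j hij
      have h1 : e (Sum.inr i) < e (Sum.inr j) := by
        rw [Fin.lt_def, he2, he2]
        exact Nat.add_lt_add_left hij p
      have h2 := hg h1
      rw [Fin.lt_def] at h2 ⊢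
      have := hg2b i
      simp only [hg₂]
      omega
    have hblock : (((tilde A r).submatrix f g).submatrix e e)
        = Matrix.fromBlocks (A.submatrix f₁ g₁) 0 0
          ((1 : Matrix (Fin r) (Fin r) ℝ).submatrix f₂ g₂) := by
      ext i j
      rcases i with i | i <;> rcases j with j | j
      · simp only [Matrix.submatrix_apply, Matrix.fromBlocks_apply₁₁]
        rw [tilde_AA A r _ _ (hf1b i) (hg1b j)]
      · simp only [Matrix.submatrix_apply, Matrix.fromBlocks_apply₁₂, Matrix.zero_apply]
        exact tilde_AI A r _ _ (hf1b i) (hg2b j)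
      · simp only [Matrix.submatrix_apply, Matrix.fromBlocks_apply₂₁, Matrix.zero_apply]
        exact tilde_IA A r _ _ (hf2b i) (hg1b j)
      · simp only [Matrix.submatrix_apply, Matrix.fromBlocks_apply₂₂]
        rw [tilde_II A r _ _ (hf2b i) (hg2b j)]
        rw [Matrix.one_apply]
        have : (f₂ i = g₂ j) ↔ ((f (e (Sum.inr i))).1 - m = (g (e (Sum.inr j))).1 - n) := by
          rw [Fin.ext_iff]
        by_cases hc : (f (e (Sum.inr i))).1 - m = (g (e (Sum.inr j))).1 - n
        · rw [if_pos hc, if_pos (this.2 hc)]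
        · rw [if_neg hc, if_neg (fun hh => hc (this.1 hh))]
    have hdet := Matrix.det_submatrix_equiv_self e ((tilde A r).submatrix f g)
    rw [← hdet, hblock, Matrix.det_fromBlocks_zero₂₁]
    exact mul_nonneg (hA p (le_trans hpk hk) f₁ g₁ hmono1 hmono2)
      (det_submatrix_one_nonneg f₂ g₂ hmono3 hmono4)
  · -- p > q : determinant vanishes
    have hcard : (Finset.univ.filter (fun i : Fin k => ¬ (f i).1 < m)).card
        < (Finset.univ.filter (fun j : Fin k => ¬ (g j).1 < n)).card := by
      have h1 := Finset.card_filter_add_card_filter_not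
        (s := (Finset.univ : Finset (Fin k))) (p := fun i : Fin k => (f i).1 < m)
      have h2 := Finset.card_filter_add_card_filter_not
        (s := (Finset.univ : Finset (Fin k))) (p := fun j : Fin k => (g j).1 < n)
      simp only [Finset.card_univ, Fintype.card_fin] at h1 h2
      omega
    rw [det_zero_pigeon ((tilde A r).submatrix f g) (fun i => ¬ (f i).1 < m)
      (fun j => ¬ (g j).1 < n) hcard
      (fun i j hP hQ => tilde_AI A r (f i) (g j) (not_not.1 hP) hQ)]

lemma tilde_witness {m n r k : ℕ} (A : Matrix (Fin m) (Fin n) ℝ) (hk : k ≤ r) :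
    ((tilde A r).submatrix
      (fun i : Fin k => (⟨m + i.1, by omega⟩ : Fin (m + r)))
      (fun j : Fin k => (⟨n + j.1, by omega⟩ : Fin (n + r)))).det = 1 := by
  have : ((tilde A r).submatrix
      (fun i : Fin k => (⟨m + i.1, by omega⟩ : Fin (m + r)))
      (fun j : Fin k => (⟨n + j.1, by omega⟩ : Fin (n + r))))
      = (1 : Matrix (Fin k) (Fin k) ℝ) := by
    ext i j
    simp only [Matrix.submatrix_apply]
    rw [tilde_II A r _ _ (by simp) (by simp)]
    rw [Matrix.one_apply]
    have h1 : m + i.1 - m = i.1 := by omega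
    have h2 : n + j.1 - n = j.1 := by omega
    simp only [h1, h2]
    by_cases hc : i = j
    · rw [if_pos hc, if_pos (by rw [hc])]
    · rw [if_neg hc, if_neg (fun hh => hc (Fin.ext hh))]
  rw [this, Matrix.det_one]



lemma submatrix_mul'' {I J K I' K' : Type*} [Fintype J] (U : Matrix I J ℝ) (V : Matrix J K ℝ)
    (f : I' → I) (g : K' → K) :
    (U * V).submatrix f g = U.submatrix f id * V.submatrix id g := by
  ext i j
  simp [Matrix.mul_apply]

lemma smoothed_TP {m n r : ℕ} (A : Matrix (Fin m) (Fin n) ℝ)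
    (hA : ∀ (k : ℕ), k ≤ r → ∀ (f : Fin k → Fin m) (g : Fin k → Fin n),
      StrictMono f → StrictMono g → 0 ≤ (A.submatrix f g).det)
    {q : ℝ} (h0 : 0 < q) (h1 : q * (r.factorial : ℝ) < 1)
    {k : ℕ} (hk : k ≤ r) (α : Fin k → Fin (m + r)) (β : Fin k → Fin (n + r))
    (hα : StrictMono α) (hβ : StrictMono β) :
    0 < ((ker q (m + r) * tilde A r * ker q (n + r)).submatrix α β).det := by
  classical
  have hqk : q * (k.factorial : ℝ) < 1 := by
    have hle : (k.factorial : ℝ) ≤ (r.factorial : ℝ) := by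
      exact_mod_cast Nat.factorial_le hk
    nlinarith
  set P : Matrix (Fin k) (Fin (n + r)) ℝ := (ker q (m + r) * tilde A r).submatrix α id with hP
  set Q : Matrix (Fin (n + r)) (Fin k) ℝ := (ker q (n + r)).submatrix id β with hQ
  have e1 : ((ker q (m + r) * tilde A r * ker q (n + r)).submatrix α β) = P * Q := by
    rw [hP, hQ]
    exact submatrix_mul'' _ _ _ _
  rw [e1, cauchy_binet]
  -- inner expansion for each δ
  have hinner : ∀ δ : Fin k → Fin (n + r),
      (P.submatrix id δ).det
        = ∑ γ ∈ Finset.univ.filter (fun γ : Fin k → Fin (m + r) => StrictMono γ),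
          ((ker q (m + r)).submatrix α γ).det * ((tilde A r).submatrix γ δ).det := by
    intro δ
    have e2 : P.submatrix id δ = ((ker q (m + r)).submatrix α id) * ((tilde A r).submatrix id δ) := by
      rw [hP, Matrix.submatrix_submatrix]
      simp only [Function.comp_id, Function.id_comp]
      exact submatrix_mul'' _ _ _ _
    rw [e2, cauchy_binet]
    refine Finset.sum_congr rfl fun γ _ => ?_
    rw [Matrix.submatrix_submatrix, Matrix.submatrix_submatrix]
    simp [Function.comp_id, Function.id_comp]
  have hQdet : ∀ δ : Fin k → Fin (n + r), StrictMono δ →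
      0 < (Q.submatrix δ id).det := by
    intro δ hδ
    rw [hQ, Matrix.submatrix_submatrix]
    simp only [Function.comp_id, Function.id_comp]
    exact ker_minor_pos h0 hqk δ β hδ hβ
  have hnn : ∀ δ ∈ Finset.univ.filter (fun δ : Fin k → Fin (n + r) => StrictMono δ),
      0 ≤ (P.submatrix id δ).det * (Q.submatrix δ id).det := by
    intro δ hδ
    have hδm : StrictMono δ := (Finset.mem_filter.1 hδ).2
    apply mul_nonneg _ (hQdet δ hδm).le
    rw [hinner δ]
    apply Finset.sum_nonneg
    intro γ hγ
    have hγm : StrictMono γ := (Finset.mem_filter.1 hγ).2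
    exact mul_nonneg (ker_minor_pos h0 hqk α γ hα hγm).le
      (tilde_TN A hA hk γ δ hγm hδm)
  apply Finset.sum_pos' hnn
  -- the positive witness
  set δ₀ : Fin k → Fin (n + r) := fun j => ⟨n + j.1, by omega⟩ with hδ₀
  set γ₀ : Fin k → Fin (m + r) := fun i => ⟨m + i.1, by omega⟩ with hγ₀
  have hδ₀m : StrictMono δ₀ := by
    intro i j hij
    rw [Fin.lt_def]
    simpa [hδ₀] using hij
  have hγ₀m : StrictMono γ₀ := by
    intro i j hij
    rw [Fin.lt_def]
    simpa [hγ₀] using hij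
  refine ⟨δ₀, Finset.mem_filter.2 ⟨Finset.mem_univ _, hδ₀m⟩, ?_⟩
  apply mul_pos _ (hQdet δ₀ hδ₀m)
  rw [hinner δ₀]
  apply Finset.sum_pos'
  · intro γ hγ
    have hγm : StrictMono γ := (Finset.mem_filter.1 hγ).2
    exact mul_nonneg (ker_minor_pos h0 hqk α γ hα hγm).le
      (tilde_TN A hA hk γ δ₀ hγm hδ₀m)
  · refine ⟨γ₀, Finset.mem_filter.2 ⟨Finset.mem_univ _, hγ₀m⟩, ?_⟩
    have hwit : ((tilde A r).submatrix γ₀ δ₀).det = 1 := tilde_witness A hk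
    rw [hwit, mul_one]
    exact ker_minor_pos h0 hqk α γ₀ hα hγ₀m

lemma ker_zero (M : ℕ) : ker 0 M = (1 : Matrix (Fin M) (Fin M) ℝ) := by
  ext i j
  show (0 : ℝ) ^ dd i.1 j.1 = (1 : Matrix (Fin M) (Fin M) ℝ) i j
  rw [Matrix.one_apply]
  by_cases hij : i = j
  · subst hij
    have : dd i.1 i.1 = 0 := by unfold dd; simp
    rw [this, if_pos rfl, pow_zero]
  · have hne : dd i.1 j.1 ≠ 0 := by
      unfold dd
      intro hc
      apply hij
      have : ((i.1 : ℤ) - j.1).natAbs = 0 := by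
        by_contra h'
        exact h' (by nlinarith [Nat.pos_of_ne_zero h'] : ((i.1:ℤ) - j.1).natAbs = 0)
      have : (i.1 : ℤ) = j.1 := by omega
      exact Fin.ext (by exact_mod_cast this)
    rw [zero_pow hne, if_neg hij]

lemma entry_continuous {m n r : ℕ} (A : Matrix (Fin m) (Fin n) ℝ)
    (i : Fin (m + r)) (j : Fin (n + r)) :
    Continuous (fun q : ℝ => (ker q (m + r) * tilde A r * ker q (n + r)) i j) := by
  have hrw : (fun q : ℝ => (ker q (m + r) * tilde A r * ker q (n + r)) i j)
      = fun q : ℝ => ∑ y : Fin (n + r), ∑ x : Fin (m + r),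
          q ^ dd i.1 x.1 * tilde A r x y * q ^ dd y.1 j.1 := by
    funext q
    simp only [Matrix.mul_apply]
    rw [Finset.sum_congr rfl (fun y _ => Finset.sum_mul _ _ _)]
    rfl
  rw [hrw]
  apply continuous_finset_sum
  intro y _
  apply continuous_finset_sum
  intro x _
  exact ((continuous_pow _).mul continuous_const).mul (continuous_pow _)



theorem main {m n : ℕ} (hm : 1 ≤ m) (hn : 1 ≤ n)
    (r : ℕ) (hr1 : 1 ≤ r) (hr : r ≤ min m n)
    (A : Matrix (Fin m) (Fin n) ℝ)
    (hA : ∀ (k : ℕ), k ≤ r → ∀ (f : Fin k → Fin m) (g : Fin k → Fin n),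
      StrictMono f → StrictMono g → 0 ≤ (A.submatrix f g).det)
    (ε : ℝ) (hε : 0 < ε) :
    ∃ B : Matrix (Fin m) (Fin n) ℝ,
      (∀ (k : ℕ), k ≤ r → ∀ (f : Fin k → Fin m) (g : Fin k → Fin n),
        StrictMono f → StrictMono g → 0 < (B.submatrix f g).det) ∧
      ∀ i j, |A i j - B i j| < ε := by
  classical
  have hmr : m ≤ m + r := Nat.le_add_right m r
  have hnr : n ≤ n + r := Nat.le_add_right n r
  have hev1 : ∀ p : Fin m × Fin n, ∀ᶠ q in nhds (0:ℝ),
      |A p.1 p.2 - (ker q (m + r) * tilde A r * ker q (n + r))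
        (Fin.castLE hmr p.1) (Fin.castLE hnr p.2)| < ε := by
    intro p
    have hval : (ker (0:ℝ) (m + r) * tilde A r * ker (0:ℝ) (n + r))
        (Fin.castLE hmr p.1) (Fin.castLE hnr p.2) = A p.1 p.2 := by
      rw [ker_zero, ker_zero, Matrix.one_mul, Matrix.mul_one]
      rw [tilde_AA A r _ _ (by simpa using p.1.2) (by simpa using p.2.2)]
      congr 1 <;> exact Fin.ext rfl
    have hc := (entry_continuous A (Fin.castLE hmr p.1) (Fin.castLE hnr p.2)).tendsto 0
    rw [hval] at hc
    have := (Metric.tendsto_nhds.1 hc) ε hε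
    filter_upwards [this] with q hq
    rw [Real.dist_eq] at hq
    rw [abs_sub_comm] at hq
    exact hq
  have hev : ∀ᶠ q in nhds (0:ℝ), ∀ p : Fin m × Fin n,
      |A p.1 p.2 - (ker q (m + r) * tilde A r * ker q (n + r))
        (Fin.castLE hmr p.1) (Fin.castLE hnr p.2)| < ε :=
    Filter.eventually_all.2 hev1
  have hev2 : ∀ᶠ q in nhds (0:ℝ), q * (r.factorial : ℝ) < 1 := by
    have ht : Filter.Tendsto (fun q : ℝ => q * (r.factorial : ℝ)) (nhds 0)
        (nhds (0 * (r.factorial : ℝ))) := Filter.tendsto_id.mul_const _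
    rw [zero_mul] at ht
    exact ht.eventually_lt_const (by norm_num)
  have hev3 : ∀ᶠ q in nhdsWithin (0:ℝ) (Set.Ioi 0), 0 < q := eventually_mem_nhdsWithin
  have H := ((hev.and hev2).filter_mono nhdsWithin_le_nhds).and hev3
  obtain ⟨q, ⟨⟨hq1, hq2⟩, hq3⟩⟩ := H.exists
  refine ⟨(ker q (m + r) * tilde A r * ker q (n + r)).submatrix
    (Fin.castLE hmr) (Fin.castLE hnr), ?_, ?_⟩
  · intro k hk f g hf hg
    rw [Matrix.submatrix_submatrix]
    exact smoothed_TP A hA hq3 hq2 hk _ _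
      ((Fin.strictMono_castLE hmr).comp hf) ((Fin.strictMono_castLE hnr).comp hg)
  · intro i j
    exact hq1 (i, j)

end TPDense


/-- The `m`-by-`n` TP_r matrices are dense in the `m`-by-`n` TN_r matrices. -/
theorem TPr_dense_in_TNr {m n : ℕ} (hm : 1 ≤ m) (hn : 1 ≤ n)
    (r : ℕ) (hr1 : 1 ≤ r) (hr : r ≤ min m n)
    (A : Matrix (Fin m) (Fin n) ℝ) (hA : IsTNr A r)
    (ε : ℝ) (hε : 0 < ε) :
    ∃ B : Matrix (Fin m) (Fin n) ℝ, IsTPr B r ∧ ∀ i j, |A i j - B i j| < ε := by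
  obtain ⟨B, h1, h2⟩ := TPDense.main hm hn r hr1 hr A hA ε hε
  exact ⟨B, h1, h2⟩
end

section
/- For every n ≥ 1 and every r with 1 ≤ r ≤ n, the set of n-by-n symmetric real matrices that are totally positive of order r (TP_r) is dense in the set of n-by-n symmetric real matrices that are totally nonnegative of order r (TN_r): for every symmetric TN_r matrix A and every ε > 0 there exists a symmetric TP_r matrix B with |a_{ij} − b_{ij}| < ε for all entries. -/
open Matrix Finset Equiv



lemma cauchy_pos : ∀ {k : ℕ} (x y : Fin k → ℝ), StrictMono x → StrictMono y →
    (∀ i, 0 < x i) → (∀ i, 0 < y i) →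
    0 < Matrix.det (Matrix.of fun i j => (x i + y j)⁻¹) := by
  intro k
  induction k with
  | zero => intro x y _ _ _ _; simp [Matrix.det_fin_zero]
  | succ k ih =>
    intro x y hx hy hx0 hy0
    set L : Fin (k+1) := Fin.last k with hL
    have hsum : ∀ i j : Fin (k+1), (0:ℝ) < x i + y j := fun i j => add_pos (hx0 i) (hy0 j)
    have hne : ∀ i j : Fin (k+1), x i + y j ≠ 0 := fun i j => (hsum i j).ne'
    set A : Matrix (Fin (k+1)) (Fin (k+1)) ℝ := Matrix.of fun i j => (x i + y j)⁻¹ with hA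
    set B : Matrix (Fin (k+1)) (Fin (k+1)) ℝ := Matrix.of fun i j =>
      if j = L then (x i + y L)⁻¹ else (x i + y j)⁻¹ - (x i + y L)⁻¹ with hB
    have hAB : A.det = B.det := by
      rw [← Matrix.det_transpose A, ← Matrix.det_transpose B]
      apply Matrix.det_eq_of_forall_row_eq_smul_add_const
        (fun j => if j = L then (0:ℝ) else 1) L (by simp)
      intro j i
      by_cases h : j = L <;> simp [hA, hB, h]
    set P : Matrix (Fin (k+1)) (Fin (k+1)) ℝ := Matrix.of fun i j =>
      if j = L then 1 else (x i + y j)⁻¹ with hP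
    have hBP : B.det = (∏ i, (x i + y L)⁻¹) * ((∏ j, if j = L then 1 else y L - y j) * P.det) := by
      have : B = Matrix.of fun i j => (x i + y L)⁻¹ *
          ((Matrix.of fun i j => (if j = L then 1 else y L - y j) * P i j) i j) := by
        ext i j
        by_cases h : j = L
        · simp [hB, hP, h]
        · simp only [hB, hP, Matrix.of_apply, h, if_false]
          rw [inv_sub_inv (hne i j) (hne i L), div_eq_mul_inv, mul_inv]
          ring
      rw [this, Matrix.det_mul_column, Matrix.det_mul_row]
    set Q : Matrix (Fin (k+1)) (Fin (k+1)) ℝ := Matrix.of fun i j =>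
      if i = L then P L j else P i j - P L j with hQ
    have hPQ : P.det = Q.det := by
      apply Matrix.det_eq_of_forall_row_eq_smul_add_const
        (fun i => if i = L then (0:ℝ) else 1) L (by simp)
      intro i j
      by_cases h : i = L <;> simp [hQ, h]
    set R : Matrix (Fin (k+1)) (Fin (k+1)) ℝ := Matrix.of fun i j =>
      if i = L then 1 else (if j = L then 0 else (x i + y j)⁻¹) with hR
    have hQR : Q.det = (∏ i, if i = L then 1 else x L - x i) *
        ((∏ j, if j = L then 1 else (x L + y j)⁻¹) * R.det) := by
      have : Q = Matrix.of fun i j => (if i = L then 1 else x L - x i) *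
          ((Matrix.of fun i j => (if j = L then 1 else (x L + y j)⁻¹) * R i j) i j) := by
        ext i j
        by_cases hi : i = L <;> by_cases hj : j = L
        · simp [hQ, hP, hR, hi, hj]
        · simp [hQ, hP, hR, hi, hj]
        · simp [hQ, hP, hR, hi, hj]
        · simp only [hQ, hP, hR, Matrix.of_apply, hi, hj, if_false]
          rw [inv_sub_inv (hne i j) (hne L j), div_eq_mul_inv, mul_inv]
          ring
      rw [this, Matrix.det_mul_column, Matrix.det_mul_row]
    have hRdet : R.det = Matrix.det (Matrix.of fun (i j : Fin k) =>
        (x i.castSucc + y j.castSucc)⁻¹) := by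
      rw [Matrix.det_succ_column R L]
      rw [Finset.sum_eq_single L]
      · have h1 : R L L = 1 := by simp [hR]
        have h2 : (Fin.last k).succAbove = Fin.castSucc := Fin.succAbove_last
        rw [h1, h2]
        have h3 : R.submatrix Fin.castSucc Fin.castSucc =
            Matrix.of fun (i j : Fin k) => (x i.castSucc + y j.castSucc)⁻¹ := by
          ext i j
          have hiL : (i.castSucc : Fin (k+1)) ≠ L := (Fin.castSucc_lt_last i).ne
          have hjL : (j.castSucc : Fin (k+1)) ≠ L := (Fin.castSucc_lt_last j).ne
          simp [hR, hiL, hjL]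
        rw [h3]
        have h4 : ((-1:ℝ)) ^ ((L:ℕ) + (L:ℕ)) = 1 := by
          rw [← two_mul, pow_mul]; norm_num
        rw [h4]; ring
      · intro i _ hiL
        have : R i L = 0 := by simp [hR, hiL]
        rw [this]; ring
      · simp
    have hx0' : ∀ i : Fin k, 0 < x i.castSucc := fun i => hx0 _
    have hy0' : ∀ i : Fin k, 0 < y i.castSucc := fun i => hy0 _
    have ihk : 0 < Matrix.det (Matrix.of fun (i j : Fin k) =>
        (x i.castSucc + y j.castSucc)⁻¹) :=
      ih _ _ (hx.comp Fin.strictMono_castSucc) (hy.comp Fin.strictMono_castSucc) hx0' hy0'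
    rw [hAB, hBP, hPQ, hQR, hRdet]
    have hfac1 : (0:ℝ) < ∏ i, (x i + y L)⁻¹ :=
      Finset.prod_pos fun i _ => inv_pos.mpr (hsum i L)
    have hfac2 : (0:ℝ) < ∏ j, if j = L then 1 else y L - y j := by
      apply Finset.prod_pos
      intro j _
      by_cases h : j = L
      · simp [h]
      · simp only [h, if_false]
        have : j < L := lt_of_le_of_ne (Fin.le_last j) h
        linarith [hy this]
    have hfac3 : (0:ℝ) < ∏ i, if i = L then 1 else x L - x i := by
      apply Finset.prod_pos
      intro i _
      by_cases h : i = L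
      · simp [h]
      · simp only [h, if_false]
        have : i < L := lt_of_le_of_ne (Fin.le_last i) h
        linarith [hx this]
    have hfac4 : (0:ℝ) < ∏ j, if j = L then 1 else (x L + y j)⁻¹ := by
      apply Finset.prod_pos
      intro j _
      by_cases h : j = L
      · simp [h]
      · simp only [h, if_false]
        exact inv_pos.mpr (hsum L j)
    exact mul_pos hfac1 (mul_pos hfac2 (mul_pos hfac3 (mul_pos hfac4 ihk)))


instance decSM {k n : ℕ} : DecidablePred (StrictMono : (Fin k → Fin n) → Prop) :=
  fun s => decidable_of_iff (∀ a b : Fin k, a < b → s a < s b) Iff.rfl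

instance decInjFin {k n : ℕ} : DecidablePred (Function.Injective : (Fin k → Fin n) → Prop) :=
  fun s => decidable_of_iff (∀ a b : Fin k, s a = s b → a = b) Iff.rfl

lemma strictMono_factor {k n : ℕ} (φ : Fin k → Fin n) (hφ : Function.Injective φ) :
    ∃ (s : Fin k → Fin n) (σ : Equiv.Perm (Fin k)), StrictMono s ∧ φ = s ∘ σ := by
  classical
  set S := Finset.image φ Finset.univ with hSdef
  have hS : S.card = k := by
    rw [hSdef, Finset.card_image_of_injective _ hφ, Finset.card_univ, Fintype.card_fin]
  have hrange : Set.range (S.orderEmbOfFin hS) = ↑S := S.range_orderEmbOfFin hS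
  have hmem : ∀ i, ∃ j, (S.orderEmbOfFin hS) j = φ i := by
    intro i
    have h1 : φ i ∈ S := by simp [hSdef]
    have h2 : φ i ∈ Set.range ⇑(S.orderEmbOfFin hS) := by
      rw [hrange]; exact Finset.mem_coe.mpr h1
    exact h2
  choose u hu using hmem
  have huinj : Function.Injective u := by
    intro a b hab
    apply hφ
    rw [← hu a, ← hu b, hab]
  exact ⟨_, Equiv.ofBijective u (Finite.injective_iff_bijective.mp huinj),
    (S.orderEmbOfFin hS).strictMono, funext fun i => (hu i).symm⟩

lemma strictMono_perm_unique {k n : ℕ} {s s' : Fin k → Fin n} {σ σ' : Equiv.Perm (Fin k)}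
    (hs : StrictMono s) (hs' : StrictMono s') (h : s ∘ σ = s' ∘ σ') : s = s' ∧ σ = σ' := by
  have hr : Set.range s = Set.range s' := by
    rw [← σ.surjective.range_comp s, ← σ'.surjective.range_comp s', h]
  have hss : s = s' := by
    have hwf : WellFoundedLT (Fin k) := inferInstance
    exact (StrictMono.range_inj hs hs').mp hr
  subst hss
  refine ⟨rfl, ?_⟩
  exact Equiv.ext fun i => hs.injective (congrFun h i)

theorem cauchy_binet {k n : ℕ} (X : Matrix (Fin k) (Fin n) ℝ) (Y : Matrix (Fin n) (Fin k) ℝ) :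
    (X * Y).det = ∑ s : {s : Fin k → Fin n // StrictMono s},
      (X.submatrix id s.1).det * (Y.submatrix s.1 id).det := by
  classical
  have h1 : (X * Y).det = ∑ r : Fin k → Fin n,
      Matrix.detRowAlternating (fun i => X i (r i) • Y (r i)) := by
    have e : (X * Y) = Matrix.of (fun i => ∑ l : Fin n, X i l • Y l) := by
      ext i j
      simp [Matrix.mul_apply, Finset.sum_apply]
    rw [e]
    exact Matrix.detRowAlternating.toMultilinearMap.map_sum (g := fun i l => X i l • Y l)
  have h2 : ∀ r : Fin k → Fin n, Matrix.detRowAlternating (fun i => X i (r i) • Y (r i))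
      = (∏ i, X i (r i)) * (Y.submatrix r id).det := by
    intro r
    have := Matrix.detRowAlternating.toMultilinearMap.map_smul_univ
      (fun i => X i (r i)) (fun i => Y (r i))
    rw [show (Matrix.detRowAlternating (fun i => X i (r i) • Y (r i)) : ℝ)
      = Matrix.detRowAlternating.toMultilinearMap (fun i => X i (r i) • Y (r i)) from rfl, this]
    rfl
  rw [h1]
  simp_rw [h2]
  set T : (Fin k → Fin n) → ℝ := fun φ => (∏ i, X i (φ i)) * (Y.submatrix φ id).det with hT
  have h3 : ∑ r : Fin k → Fin n, T r
      = ∑ r ∈ Finset.univ.filter (fun φ => Function.Injective φ), T r := by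
    symm
    apply Finset.sum_filter_of_ne
    intro φ _ hTφ
    by_contra hni
    obtain ⟨a, b, hab, hne⟩ := Function.not_injective_iff.mp hni
    have : (Y.submatrix φ id).det = 0 := by
      apply Matrix.det_zero_of_row_eq hne
      funext j
      simp [Matrix.submatrix_apply, hab]
    rw [hT] at hTφ
    simp only at hTφ
    rw [this, mul_zero] at hTφ
    exact hTφ rfl
  have h4 : ∑ p : {s : Fin k → Fin n // StrictMono s} × Equiv.Perm (Fin k), T (p.1.1 ∘ p.2)
      = ∑ r ∈ Finset.univ.filter (fun φ => Function.Injective φ), T r := by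
    apply Finset.sum_bij (fun p _ => p.1.1 ∘ p.2)
    · intro p _
      simp only [Finset.mem_filter, Finset.mem_univ, true_and]
      exact p.1.2.injective.comp p.2.injective
    · intro p _ q _ hpq
      have := strictMono_perm_unique p.1.2 q.1.2 hpq
      ext1
      · exact Subtype.ext this.1
      · exact this.2
    · intro φ hφ
      simp only [Finset.mem_filter, Finset.mem_univ, true_and] at hφ
      obtain ⟨s, σ, hs, hfac⟩ := strictMono_factor φ hφ
      exact ⟨⟨⟨s, hs⟩, σ⟩, Finset.mem_univ _, hfac.symm⟩
    · intro p _
      rfl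
  rw [h3, ← h4, Fintype.sum_prod_type]
  apply Finset.sum_congr rfl
  intro s _
  have h5 : ∀ σ : Equiv.Perm (Fin k), T (s.1 ∘ σ)
      = ((Equiv.Perm.sign σ : ℤ) : ℝ) * (Y.submatrix s.1 id).det * ∏ i, X i (s.1 (σ i)) := by
    intro σ
    have e1 : Y.submatrix (s.1 ∘ σ) id = (Y.submatrix s.1 id).submatrix σ id := by
      ext i j; simp [Matrix.submatrix_apply]
    rw [hT]
    simp only
    rw [e1, Matrix.det_permute]
    simp only [Function.comp_apply]
    push_cast
    ring
  simp_rw [h5]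
  have h6 : ∑ σ : Equiv.Perm (Fin k), ((Equiv.Perm.sign σ : ℤ) : ℝ)
        * (Y.submatrix s.1 id).det * ∏ i, X i (s.1 (σ i))
      = (Y.submatrix s.1 id).det * ∑ σ : Equiv.Perm (Fin k),
        ((Equiv.Perm.sign σ : ℤ) : ℝ) * ∏ i, X i (s.1 (σ i)) := by
    rw [Finset.mul_sum]
    apply Finset.sum_congr rfl
    intro σ _
    ring
  rw [h6]
  have h7 : ∑ σ : Equiv.Perm (Fin k), ((Equiv.Perm.sign σ : ℤ) : ℝ) * ∏ i, X i (s.1 (σ i))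
      = (X.submatrix id s.1).det := by
    rw [← Matrix.det_transpose (X.submatrix id s.1), Matrix.det_apply']
    apply Finset.sum_congr rfl
    intro σ _
    simp [Matrix.transpose_apply, Matrix.submatrix_apply]
  rw [h7]
  try ring
  try exact mul_comm _ _


noncomputable def Gmat (n : ℕ) (t : ℝ) : Matrix (Fin n) (Fin n) ℝ :=
  Matrix.of fun i j => 2 * t ^ (n - 1 - i.1) * t ^ (n - 1 - j.1) *
    (t ^ (2 * (n - 1 - i.1)) + t ^ (2 * (n - 1 - j.1)))⁻¹

lemma Gmat_strictMono_x {n : ℕ} {t : ℝ} (ht : 0 < t) (ht1 : t < 1) :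
    StrictMono (fun i : Fin n => t ^ (2 * (n - 1 - i.1))) := by
  intro i j hij
  have h2 : i.1 < j.1 := hij
  have h1 : 2 * (n - 1 - j.1) < 2 * (n - 1 - i.1) := by
    have := j.2
    omega
  exact pow_lt_pow_right_of_lt_one₀ ht ht1 h1

lemma Gmat_symm {n : ℕ} (t : ℝ) : (Gmat n t).IsSymm := by
  unfold Matrix.IsSymm
  ext i j
  simp only [Gmat, Matrix.transpose_apply, Matrix.of_apply]
  ring

lemma Gmat_entry_pos {n : ℕ} {t : ℝ} (ht : 0 < t) (i j : Fin n) : 0 < Gmat n t i j := by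
  simp only [Gmat, Matrix.of_apply]
  positivity

lemma Gmat_diag {n : ℕ} {t : ℝ} (ht : 0 < t) (i : Fin n) : Gmat n t i i = 1 := by
  simp only [Gmat, Matrix.of_apply]
  have h2 : t ^ (2 * (n - 1 - i.1)) = t ^ (n - 1 - i.1) * t ^ (n - 1 - i.1) := by
    rw [two_mul, pow_add]
  rw [h2]
  have h3 : t ^ (n - 1 - i.1) ≠ 0 := (pow_pos ht _).ne'
  field_simp
  ring

lemma Gmat_le_one {n : ℕ} {t : ℝ} (ht : 0 < t) (i j : Fin n) : Gmat n t i j ≤ 1 := by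
  simp only [Gmat, Matrix.of_apply]
  set a := n - 1 - i.1
  set b := n - 1 - j.1
  have hs : (0:ℝ) < t ^ (2*a) + t ^ (2*b) := by positivity
  have key : 2 * t ^ a * t ^ b ≤ t ^ (2*a) + t ^ (2*b) := by
    have h1 : t ^ (2*a) = t ^ a * t ^ a := by rw [two_mul, pow_add]
    have h2 : t ^ (2*b) = t ^ b * t ^ b := by rw [two_mul, pow_add]
    nlinarith [sq_nonneg (t ^ a - t ^ b)]
  calc 2 * t ^ a * t ^ b * (t ^ (2*a) + t ^ (2*b))⁻¹
      ≤ (t ^ (2*a) + t ^ (2*b)) * (t ^ (2*a) + t ^ (2*b))⁻¹ :=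
        mul_le_mul_of_nonneg_right key (inv_nonneg.mpr hs.le)
    _ = 1 := mul_inv_cancel₀ hs.ne'

lemma Gmat_offdiag {n : ℕ} {t : ℝ} (ht : 0 < t) (ht1 : t < 1) (i j : Fin n) (hij : i ≠ j) :
    Gmat n t i j ≤ 2 * t := by
  simp only [Gmat, Matrix.of_apply]
  set a := n - 1 - i.1 with ha
  set b := n - 1 - j.1 with hb
  have hab : a ≠ b := by
    have hi := i.2
    have hj := j.2
    have hv : i.1 ≠ j.1 := fun h => hij (Fin.ext h)
    omega
  set m := min a b with hm
  have hs : (0:ℝ) < t ^ (2*a) + t ^ (2*b) := by positivity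
  have hmono : t ^ (2*m) ≤ t ^ (2*a) + t ^ (2*b) := by
    rcases min_choice a b with h | h
    · have he : t ^ (2*m) = t ^ (2*a) := by rw [hm, h]
      nlinarith [pow_pos ht (2*b)]
    · have he : t ^ (2*m) = t ^ (2*b) := by rw [hm, h]
      nlinarith [pow_pos ht (2*a)]
  have hinv : (t ^ (2*a) + t ^ (2*b))⁻¹ ≤ (t ^ (2*m))⁻¹ := inv_anti₀ (pow_pos ht _) hmono
  have hexp : 1 ≤ a + b - 2*m := by omega
  calc 2 * t ^ a * t ^ b * (t ^ (2*a) + t ^ (2*b))⁻¹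
      ≤ 2 * t ^ a * t ^ b * (t ^ (2*m))⁻¹ := by
        apply mul_le_mul_of_nonneg_left hinv
        positivity
    _ = 2 * t ^ (a + b - 2*m) := by
        rw [pow_sub₀ t ht.ne' (by omega : 2*m ≤ a + b)]
        rw [pow_add]
        field_simp
    _ ≤ 2 * t ^ 1 := by
        apply mul_le_mul_of_nonneg_left _ (by norm_num : (0:ℝ) ≤ 2)
        exact pow_le_pow_of_le_one ht.le ht1.le hexp
    _ = 2 * t := by ring

lemma Gmat_sub_det_pos {n : ℕ} {t : ℝ} (ht : 0 < t) (ht1 : t < 1)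
    {k : ℕ} (f g : Fin k → Fin n) (hf : StrictMono f) (hg : StrictMono g) :
    0 < ((Gmat n t).submatrix f g).det := by
  have hx := Gmat_strictMono_x (n := n) ht ht1
  have hrw : (Gmat n t).submatrix f g = Matrix.of fun i j =>
      (2 * t ^ (n - 1 - (f i).1)) * ((Matrix.of fun i j => (t ^ (n - 1 - (g j).1)) *
        ((Matrix.of fun (i j : Fin k) =>
          ((t ^ (2 * (n - 1 - (f i).1)) + t ^ (2 * (n - 1 - (g j).1)))⁻¹)) i j)) i j) := by
    ext i j
    simp only [Gmat, Matrix.submatrix_apply, Matrix.of_apply]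
    ring
  rw [hrw, Matrix.det_mul_column, Matrix.det_mul_row]
  have hc : 0 < Matrix.det (Matrix.of fun (i j : Fin k) =>
      (t ^ (2 * (n - 1 - (f i).1)) + t ^ (2 * (n - 1 - (g j).1)))⁻¹) := by
    exact cauchy_pos (fun i => t ^ (2 * (n - 1 - (f i).1)))
      (fun j => t ^ (2 * (n - 1 - (g j).1)))
      (fun a b hab => hx (hf hab)) (fun a b hab => hx (hg hab))
      (fun i => pow_pos ht _) (fun i => pow_pos ht _)
  have h1 : (0:ℝ) < ∏ i, 2 * t ^ (n - 1 - (f i).1) :=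
    Finset.prod_pos fun i _ => by positivity
  have h2 : (0:ℝ) < ∏ j, t ^ (n - 1 - (g j).1) :=
    Finset.prod_pos fun i _ => by positivity
  exact mul_pos h1 (mul_pos h2 hc)
-- PART 5 : corner bump lemmas (needs IsTNr, IsTPr defs)

lemma det_updateRow_single_last {k : ℕ} (N : Matrix (Fin (k+1)) (Fin (k+1)) ℝ) :
    (N.updateRow (Fin.last k) (Pi.single (Fin.last k) 1)).det
      = (N.submatrix Fin.castSucc Fin.castSucc).det := by
  rw [Matrix.det_succ_row _ (Fin.last k)]
  rw [Finset.sum_eq_single (Fin.last k)]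
  · have h1 : (N.updateRow (Fin.last k) (Pi.single (Fin.last k) 1)) (Fin.last k) (Fin.last k)
        = 1 := by simp
    have he : (N.updateRow (Fin.last k) (Pi.single (Fin.last k) 1)).submatrix
        (Fin.last k).succAbove (Fin.last k).succAbove = N.submatrix Fin.castSucc Fin.castSucc := by
      rw [Fin.succAbove_last]
      ext i j
      simp [Matrix.updateRow_apply, (Fin.castSucc_lt_last i).ne]
    rw [h1, he]
    have hsgn : (-1 : ℝ) ^ ((Fin.last k : ℕ) + (Fin.last k : ℕ)) = 1 := by
      rw [← two_mul, pow_mul]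
      norm_num
    rw [hsgn]
    ring
  · intro j _ hj
    have : (N.updateRow (Fin.last k) (Pi.single (Fin.last k) 1)) (Fin.last k) j = 0 := by
      simp [Pi.single_apply, hj]
    rw [this]
    ring
  · simp

lemma det_add_corner {k : ℕ} (N : Matrix (Fin (k+1)) (Fin (k+1)) ℝ) (δ : ℝ) :
    (N + Matrix.single (Fin.last k) (Fin.last k) δ).det
      = N.det + δ * (N.submatrix Fin.castSucc Fin.castSucc).det := by
  have e : N + Matrix.single (Fin.last k) (Fin.last k) δ
      = N.updateRow (Fin.last k) (N (Fin.last k) + Pi.single (Fin.last k) δ) := by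
    ext i j
    by_cases h : i = Fin.last k
    · subst h
      simp [Matrix.single, Pi.single_apply, eq_comm]
    · rw [Matrix.updateRow_ne h]
      have hni : ¬(Fin.last k = i ∧ Fin.last k = j) := fun hh => h hh.1.symm
      simp only [Matrix.add_apply, Matrix.single, Matrix.of_apply, hni, if_false,
        add_zero]
  rw [e, Matrix.det_updateRow_add, Matrix.updateRow_eq_self]
  congr 1
  have hs : (Pi.single (Fin.last k) δ : Fin (k+1) → ℝ)
      = δ • (Pi.single (Fin.last k) 1 : Fin (k+1) → ℝ) := by
    ext j
    by_cases h : j = Fin.last k <;> simp [Pi.single_apply, h]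
  rw [hs, Matrix.det_updateRow_smul, det_updateRow_single_last]

lemma stdBasis_submatrix_last {n k : ℕ} (p : Fin n) (δ : ℝ) (f g : Fin (k+1) → Fin n)
    (hf : Function.Injective f) (hg : Function.Injective g)
    (hfl : f (Fin.last k) = p) (hgl : g (Fin.last k) = p) :
    (Matrix.single p p δ).submatrix f g
      = Matrix.single (Fin.last k) (Fin.last k) δ := by
  have hfi : ∀ i, (p = f i) ↔ (Fin.last k = i) :=
    fun i => ⟨fun h => hf (by rw [hfl, h]), fun h => by rw [← h, hfl]⟩
  have hgj : ∀ j, (p = g j) ↔ (Fin.last k = j) :=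
    fun j => ⟨fun h => hg (by rw [hgl, h]), fun h => by rw [← h, hgl]⟩
  ext i j
  simp only [Matrix.submatrix_apply, Matrix.single, Matrix.of_apply, hfi, hgj]

/-- if `p` has no preimage under `f` (or under `g`), the submatrix of the bump is zero -/
lemma stdBasis_submatrix_zero {n k : ℕ} (p : Fin n) (δ : ℝ) (f g : Fin k → Fin n)
    (h : (∀ i, f i ≠ p) ∨ (∀ j, g j ≠ p)) :
    (Matrix.single p p δ).submatrix f g = 0 := by
  ext i j
  simp only [Matrix.submatrix_apply, Matrix.single, Matrix.of_apply, Matrix.zero_apply]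
  rcases h with h | h
  · have hni : ¬(p = f i ∧ p = g j) := fun hh => (h i) hh.1.symm
    simp [hni]
  · have hni : ¬(p = f i ∧ p = g j) := fun hh => (h j) hh.2.symm
    simp [hni]

lemma strictMono_eq_last {n k : ℕ} (p : Fin n) (hp : p.1 = n - 1) (f : Fin (k+1) → Fin n)
    (hf : StrictMono f) (i : Fin (k+1)) (hfi : f i = p) : i = Fin.last k := by
  by_contra h
  have hi : i < Fin.last k := lt_of_le_of_ne (Fin.le_last i) h
  have h2 := hf hi
  rw [hfi] at h2
  have h3 : p.1 < (f (Fin.last k)).1 := h2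
  have h4 := (f (Fin.last k)).2
  omega

lemma bump_corner_eq {n k' : ℕ} (p : Fin n) (M : Matrix (Fin n) (Fin n) ℝ) (δ : ℝ)
    (f g : Fin (k'+1) → Fin n) (hf : StrictMono f) (hg : StrictMono g)
    (hfl : f (Fin.last k') = p) (hgl : g (Fin.last k') = p) :
    ((M + Matrix.single p p δ).submatrix f g).det
      = (M.submatrix f g).det
        + δ * ((M.submatrix (f ∘ Fin.castSucc) (g ∘ Fin.castSucc)).det) := by
  have e0 : (M + Matrix.single p p δ).submatrix f g
      = M.submatrix f g + (Matrix.single p p δ).submatrix f g := by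
    ext i j
    simp [Matrix.submatrix_apply, Matrix.add_apply]
  have e : (M + Matrix.single p p δ).submatrix f g
      = M.submatrix f g + Matrix.single (Fin.last k') (Fin.last k') δ := by
    rw [e0, stdBasis_submatrix_last p δ f g hf.injective hg.injective hfl hgl]
  rw [e, det_add_corner, Matrix.submatrix_submatrix]

lemma bump_mono {n r : ℕ} (p : Fin n) (hp : p.1 = n - 1) (M : Matrix (Fin n) (Fin n) ℝ)
    (hTN : IsTNr M r) (δ : ℝ) (hδ : 0 ≤ δ) :
    ∀ (k : ℕ), k ≤ r → ∀ (f g : Fin k → Fin n), StrictMono f → StrictMono g →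
      (M.submatrix f g).det ≤ ((M + Matrix.single p p δ).submatrix f g).det := by
  intro k hk f g hf hg
  cases k with
  | zero =>
    rw [Matrix.det_fin_zero, Matrix.det_fin_zero]
  | succ k' =>
    by_cases hc : f (Fin.last k') = p ∧ g (Fin.last k') = p
    · rw [bump_corner_eq p M δ f g hf hg hc.1 hc.2]
      have hnn : 0 ≤ δ * ((M.submatrix (f ∘ Fin.castSucc) (g ∘ Fin.castSucc)).det) :=
        mul_nonneg hδ (hTN k' (by omega) _ _ (hf.comp Fin.strictMono_castSucc)
          (hg.comp Fin.strictMono_castSucc))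
      linarith
    · have hz : (Matrix.single p p δ).submatrix f g = 0 := by
        apply stdBasis_submatrix_zero
        rcases not_and_or.mp hc with h | h
        · left
          intro i hip
          exact h (by rw [← strictMono_eq_last p hp f hf i hip, hip])
        · right
          intro j hjp
          exact h (by rw [← strictMono_eq_last p hp g hg j hjp, hjp])
      have e0 : (M + Matrix.single p p δ).submatrix f g
          = M.submatrix f g + (Matrix.single p p δ).submatrix f g := by
        ext i j
        simp [Matrix.submatrix_apply, Matrix.add_apply]
      rw [e0, hz, add_zero]

lemma bump_TN {n r : ℕ} (p : Fin n) (hp : p.1 = n - 1) (M : Matrix (Fin n) (Fin n) ℝ)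
    (hTN : IsTNr M r) (δ : ℝ) (hδ : 0 ≤ δ) :
    IsTNr (M + Matrix.single p p δ) r := by
  intro k hk f g hf hg
  exact le_trans (hTN k hk f g hf hg) (bump_mono p hp M hTN δ hδ k hk f g hf hg)

lemma stdBasis_diag_symm {n : ℕ} (p : Fin n) (δ : ℝ) :
    (Matrix.single p p δ).IsSymm := by
  unfold Matrix.IsSymm
  ext i j
  simp only [Matrix.transpose_apply, Matrix.single, Matrix.of_apply, and_comm]
-- PART 4 : smoothing lemma

lemma submatrix_mul_full {n k : ℕ} (A B : Matrix (Fin n) (Fin n) ℝ)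
    (f g : Fin k → Fin n) :
    (A * B).submatrix f g = (A.submatrix f id) * (B.submatrix id g) := by
  ext i j
  simp [Matrix.mul_apply]

lemma smooth_lemma {n r K : ℕ} (hK : K ≤ r) (C : Matrix (Fin n) (Fin n) ℝ) (hsym : C.IsSymm)
    (hTN : IsTNr C r)
    (hgood : ∀ j, j ≤ K → ∃ (α β : Fin j → Fin n), StrictMono α ∧ StrictMono β ∧
      0 < ((C.submatrix α β).det))
    (ε : ℝ) (hε : 0 < ε) :
    ∃ M : Matrix (Fin n) (Fin n) ℝ, M.IsSymm ∧ IsTNr M r ∧ IsTPr M K ∧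
      ∀ i j, |M i j - C i j| < ε := by
  classical
  set KC : ℝ := (∑ a : Fin n, ∑ b : Fin n, |C a b|) + 1 with hKCdef
  have hKC1 : 1 ≤ KC := by
    have h0 : (0:ℝ) ≤ ∑ a : Fin n, ∑ b : Fin n, |C a b| :=
      Finset.sum_nonneg fun a _ => Finset.sum_nonneg fun b _ => abs_nonneg _
    simp only [hKCdef]
    linarith
  have hKC0 : (0:ℝ) < KC := lt_of_lt_of_le one_pos hKC1
  have hCB : ∀ a b, |C a b| ≤ KC := by
    intro a b
    have h1 : |C a b| ≤ ∑ b' : Fin n, |C a b'| :=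
      Finset.single_le_sum (f := fun b' => |C a b'|) (fun _ _ => abs_nonneg _)
        (Finset.mem_univ b)
    have h2 : (∑ b' : Fin n, |C a b'|) ≤ ∑ a' : Fin n, ∑ b' : Fin n, |C a' b'| :=
      Finset.single_le_sum (f := fun a' => ∑ b' : Fin n, |C a' b'|)
        (fun _ _ => Finset.sum_nonneg fun _ _ => abs_nonneg _) (Finset.mem_univ a)
    simp only [hKCdef]
    linarith
  set D : ℝ := 2 * (n:ℝ) * (n:ℝ) * KC + 1 with hDdef
  have hD0 : (0:ℝ) < D := by
    have h0 : (0:ℝ) ≤ 2 * (n:ℝ) * (n:ℝ) * KC := by positivity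
    simp only [hDdef]; linarith
  set T : ℝ := ε / D with hTdef
  have hT0 : 0 < T := div_pos hε hD0
  set t : ℝ := min (1/2) T with htdef
  have ht : 0 < t := lt_min (by norm_num) hT0
  have ht1 : t < 1 := lt_of_le_of_lt (min_le_left _ _) (by norm_num)
  have htT : t ≤ T := min_le_right _ _
  set G := Gmat n t with hGdef
  have Gdiag : ∀ i : Fin n, G i i = 1 := fun i => by rw [hGdef]; exact Gmat_diag ht i
  have Gpos : ∀ i j : Fin n, 0 < G i j := fun i j => by rw [hGdef]; exact Gmat_entry_pos ht i j
  have Gle1 : ∀ i j : Fin n, G i j ≤ 1 := fun i j => by rw [hGdef]; exact Gmat_le_one ht i j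
  have Goff : ∀ i j : Fin n, i ≠ j → G i j ≤ 2 * t := fun i j hij => by
    rw [hGdef]; exact Gmat_offdiag ht ht1 i j hij
  have Gdet : ∀ {k : ℕ} (f g : Fin k → Fin n), StrictMono f → StrictMono g →
      0 < ((G.submatrix f g)).det := fun f g hf hg => by
    rw [hGdef]; exact Gmat_sub_det_pos ht ht1 f g hf hg
  have key : ∀ (k : ℕ) (f g : Fin k → Fin n),
      (((G * C * G)).submatrix f g).det
        = ∑ s : {s : Fin k → Fin n // StrictMono s},
            (∑ u : {u : Fin k → Fin n // StrictMono u},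
              ((G.submatrix f u.1).det) * ((C.submatrix u.1 s.1).det))
              * ((G.submatrix s.1 g).det) := by
    intro k f g
    rw [submatrix_mul_full (G*C) G f g, cauchy_binet]
    refine Finset.sum_congr rfl fun s _ => ?_
    have e2 : ((G*C).submatrix f id).submatrix id s.1
        = (G.submatrix f id) * (C.submatrix id s.1) := by
      ext i j; simp [Matrix.mul_apply]
    have e3 : (G.submatrix id g).submatrix s.1 id = G.submatrix s.1 g := by
      ext i j; simp
    have eC : ((G.submatrix f id) * (C.submatrix id s.1)).det
        = ∑ u : {u : Fin k → Fin n // StrictMono u},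
            ((G.submatrix f u.1).det) * ((C.submatrix u.1 s.1).det) := by
      rw [cauchy_binet]
      refine Finset.sum_congr rfl fun u _ => ?_
      have e4 : (G.submatrix f id).submatrix id u.1 = G.submatrix f u.1 := by
        ext i j; simp
      have e5 : (C.submatrix id s.1).submatrix u.1 id = C.submatrix u.1 s.1 := by
        ext i j; simp
      rw [e4, e5]
    rw [e2, e3, eC]
  refine ⟨G * C * G, ?_, ?_, ?_, ?_⟩
  · -- symmetric
    unfold Matrix.IsSymm
    have hGs : Gᵀ = G := by rw [hGdef]; exact Gmat_symm t
    have hCs : Cᵀ = C := hsym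
    rw [Matrix.transpose_mul, Matrix.transpose_mul, hGs, hCs, Matrix.mul_assoc]
  · -- TN r
    intro k hk f g hf hg
    rw [key k f g]
    apply Finset.sum_nonneg
    intro s _
    apply mul_nonneg
    · apply Finset.sum_nonneg
      intro u _
      exact mul_nonneg (Gdet f u.1 hf u.2).le (hTN k hk u.1 s.1 u.2 s.2)
    · exact (Gdet s.1 g s.2 hg).le
  · -- TP K
    intro k hk f g hf hg
    rw [key k f g]
    obtain ⟨α, β, hα, hβ, hpos⟩ := hgood k hk
    have hk' : k ≤ r := hk.trans hK
    apply Finset.sum_pos'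
    · intro s _
      apply mul_nonneg
      · apply Finset.sum_nonneg
        intro u _
        exact mul_nonneg (Gdet f u.1 hf u.2).le (hTN k hk' u.1 s.1 u.2 s.2)
      · exact (Gdet s.1 g s.2 hg).le
    · refine ⟨⟨β, hβ⟩, Finset.mem_univ _, ?_⟩
      apply mul_pos _ (Gdet β g hβ hg)
      apply Finset.sum_pos'
      · intro u _
        exact mul_nonneg (Gdet f u.1 hf u.2).le (hTN k hk' u.1 β u.2 hβ)
      · exact ⟨⟨α, hα⟩, Finset.mem_univ _, mul_pos (Gdet f α hf hα) hpos⟩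
  · -- closeness
    intro i j
    have e1 : (G * C * G) i j
        = ∑ q ∈ (Finset.univ ×ˢ Finset.univ : Finset (Fin n × Fin n)),
            G i q.1 * C q.1 q.2 * G q.2 j := by
      rw [Finset.sum_product]
      calc (G * C * G) i j = ∑ l, (∑ m, G i m * C m l) * G l j := by
            simp [Matrix.mul_apply]
        _ = ∑ l, ∑ m, G i m * C m l * G l j := by
            refine Finset.sum_congr rfl fun l _ => ?_
            rw [Finset.sum_mul]
        _ = ∑ m, ∑ l, G i m * C m l * G l j := Finset.sum_comm
    have hmem : ((i,j) : Fin n × Fin n) ∈ (Finset.univ ×ˢ Finset.univ : Finset (Fin n × Fin n)) := by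
      simp
    have e2 : (G * C * G) i j
        = C i j + ∑ q ∈ ((Finset.univ ×ˢ Finset.univ : Finset (Fin n × Fin n)).erase (i,j)),
            G i q.1 * C q.1 q.2 * G q.2 j := by
      rw [e1, ← Finset.add_sum_erase _ _ hmem]
      congr 1
      rw [Gdiag i, Gdiag j]
      ring
    have hterm : ∀ q ∈ ((Finset.univ ×ˢ Finset.univ : Finset (Fin n × Fin n)).erase (i,j)),
        |G i q.1 * C q.1 q.2 * G q.2 j| ≤ 2 * t * KC := by
      rintro ⟨m, l⟩ hq
      have hne : (m, l) ≠ (i, j) := Finset.ne_of_mem_erase hq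
      have habs : |G i m * C m l * G l j| = G i m * |C m l| * G l j := by
        rw [abs_mul, abs_mul, abs_of_pos (Gpos i m), abs_of_pos (Gpos l j)]
      rw [habs]
      by_cases hm : m = i
      · have hl : l ≠ j := by
          intro hl
          exact hne (by rw [hm, hl])
        have b1 : G i m ≤ 1 := Gle1 i m
        have b3 : G l j ≤ 2 * t := Goff l j hl
        calc G i m * |C m l| * G l j ≤ 1 * KC * (2 * t) := by
              apply mul_le_mul _ b3 (Gpos l j).le (by positivity)
              exact mul_le_mul b1 (hCB m l) (abs_nonneg _) (by norm_num)
          _ = 2 * t * KC := by ring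
      · have b1 : G i m ≤ 2 * t := Goff i m (fun h => hm h.symm)
        have b3 : G l j ≤ 1 := Gle1 l j
        calc G i m * |C m l| * G l j ≤ (2 * t) * KC * 1 := by
              apply mul_le_mul _ b3 (Gpos l j).le (by positivity)
              exact mul_le_mul b1 (hCB m l) (abs_nonneg _) (by positivity)
          _ = 2 * t * KC := by ring
    have hsum : |∑ q ∈ ((Finset.univ ×ˢ Finset.univ : Finset (Fin n × Fin n)).erase (i,j)),
        G i q.1 * C q.1 q.2 * G q.2 j| ≤ (n * n : ℝ) * (2 * t * KC) := by
      calc |∑ q ∈ ((Finset.univ ×ˢ Finset.univ : Finset (Fin n × Fin n)).erase (i,j)),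
              G i q.1 * C q.1 q.2 * G q.2 j|
          ≤ ∑ q ∈ ((Finset.univ ×ˢ Finset.univ : Finset (Fin n × Fin n)).erase (i,j)),
              |G i q.1 * C q.1 q.2 * G q.2 j| := Finset.abs_sum_le_sum_abs _ _
        _ ≤ ((Finset.univ ×ˢ Finset.univ : Finset (Fin n × Fin n)).erase (i,j)).card
              • (2 * t * KC) := Finset.sum_le_card_nsmul _ _ _ hterm
        _ = (((Finset.univ ×ˢ Finset.univ : Finset (Fin n × Fin n)).erase (i,j)).card : ℝ)
              * (2 * t * KC) := nsmul_eq_mul _ _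
        _ ≤ (n * n : ℝ) * (2 * t * KC) := by
            apply mul_le_mul_of_nonneg_right _ (by positivity)
            have hcard : ((Finset.univ ×ˢ Finset.univ : Finset (Fin n × Fin n)).erase (i,j)).card
                ≤ n * n := by
              calc ((Finset.univ ×ˢ Finset.univ : Finset (Fin n × Fin n)).erase (i,j)).card
                  ≤ (Finset.univ ×ˢ Finset.univ : Finset (Fin n × Fin n)).card :=
                    Finset.card_erase_le
                _ = n * n := by
                    rw [Finset.card_product]
                    simp
            exact_mod_cast hcard
    have hfin : (n * n : ℝ) * (2 * t * KC) < ε := by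
      have h1 : (n * n : ℝ) * (2 * t * KC) ≤ (n * n : ℝ) * (2 * T * KC) := by
        apply mul_le_mul_of_nonneg_left _ (by positivity)
        nlinarith
      have h2 : (n * n : ℝ) * (2 * T * KC) < ε := by
        have he : (n * n : ℝ) * (2 * T * KC) = ε * ((2 * (n:ℝ) * (n:ℝ) * KC) / D) := by
          rw [hTdef]; ring
        rw [he]
        have hlt : (2 * (n:ℝ) * (n:ℝ) * KC) / D < 1 := by
          rw [div_lt_one hD0]
          simp only [hDdef]; linarith
        calc ε * ((2 * (n:ℝ) * (n:ℝ) * KC) / D) < ε * 1 := by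
              exact mul_lt_mul_of_pos_left hlt hε
          _ = ε := mul_one ε
      linarith
    have : |(G * C * G) i j - C i j| = |∑ q ∈ ((Finset.univ ×ˢ Finset.univ :
        Finset (Fin n × Fin n)).erase (i,j)), G i q.1 * C q.1 q.2 * G q.2 j| := by
      rw [e2]
      congr 1
      ring
    rw [this]
    linarith
-- PART 6 : induction step and main theorem

lemma step_lemma {n r k : ℕ} (hn : 1 ≤ n) (hr : r ≤ n) (hkr : k < r)
    (M : Matrix (Fin n) (Fin n) ℝ) (hsym : M.IsSymm) (hTN : IsTNr M r) (hTP : IsTPr M k)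
    (ε : ℝ) (hε : 0 < ε) :
    ∃ M' : Matrix (Fin n) (Fin n) ℝ, M'.IsSymm ∧ IsTNr M' r ∧ IsTPr M' (k+1) ∧
      ∀ i j, |M' i j - M i j| < ε := by
  classical
  set p : Fin n := ⟨n - 1, by omega⟩ with hpdef
  have hp : p.1 = n - 1 := rfl
  set δ : ℝ := ε / 2 with hδdef
  have hδ : 0 < δ := by positivity
  set C : Matrix (Fin n) (Fin n) ℝ := M + Matrix.single p p δ with hCdef
  have hCsym : C.IsSymm := Matrix.IsSymm.add hsym (stdBasis_diag_symm p δ)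
  have hCTN : IsTNr C r := bump_TN p hp M hTN δ hδ.le
  have hCmono := bump_mono p hp M hTN δ hδ.le
  -- the canonical embedding
  have hiota : ∀ (j : ℕ), j ≤ n → ∃ ι : Fin j → Fin n, StrictMono ι ∧
      ∀ i : Fin j, (ι i).1 = i.1 := by
    intro j hj
    exact ⟨fun i => ⟨i.1, lt_of_lt_of_le i.2 hj⟩, fun a b hab => hab, fun i => rfl⟩
  have hgood : ∀ j, j ≤ k + 1 → ∃ (α β : Fin j → Fin n), StrictMono α ∧ StrictMono β ∧
      0 < ((C.submatrix α β).det) := by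
    intro j hj
    by_cases hjk : j ≤ k
    · obtain ⟨ι, hι, -⟩ := hiota j (by omega)
      refine ⟨ι, ι, hι, hι, ?_⟩
      have h1 := hTP j hjk ι ι hι hι
      have h2 := hCmono j (by omega) ι ι hι hι
      rw [hCdef]
      linarith
    · have hj1 : j = k + 1 := by omega
      subst hj1
      -- build S
      have hSex : ∃ S : Fin (k+1) → Fin n, StrictMono S ∧ S (Fin.last k) = p ∧
          StrictMono (S ∘ Fin.castSucc) := by
        refine ⟨fun i => if h : i.1 = k then p else ⟨i.1, by omega⟩, ?_, ?_, ?_⟩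
        · intro a b hab
          have hab' : a.1 < b.1 := hab
          have hbk : b.1 ≤ k := by omega
          by_cases hb : b.1 = k
          · have ha : ¬ a.1 = k := by omega
            simp only [dif_pos hb, dif_neg ha]
            show (a.1 : ℕ) < p.1
            simp only [hp]
            omega
          · have ha : ¬ a.1 = k := by omega
            simp only [dif_neg hb, dif_neg ha]
            show a.1 < b.1
            exact hab'
        · simp [Fin.last]
        · intro a b hab
          have hab' : a.1 < b.1 := hab
          have ha : ¬ (Fin.castSucc a).1 = k := by
            have := a.2; simp [Fin.castSucc]; omega
          have hb : ¬ (Fin.castSucc b).1 = k := by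
            have := b.2; simp [Fin.castSucc]; omega
          simp only [Function.comp_apply, dif_neg ha, dif_neg hb]
          show (Fin.castSucc a).1 < (Fin.castSucc b).1
          simpa using hab'
      obtain ⟨S, hS, hSlast, hScast⟩ := hSex
      refine ⟨S, S, hS, hS, ?_⟩
      rw [hCdef, bump_corner_eq p M δ S S hS hS hSlast hSlast]
      have h1 : 0 ≤ (M.submatrix S S).det := hTN (k+1) (by omega) S S hS hS
      have h2 : 0 < (M.submatrix (S ∘ Fin.castSucc) (S ∘ Fin.castSucc)).det :=
        hTP k le_rfl _ _ hScast hScast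
      nlinarith
  obtain ⟨M', hM'sym, hM'TN, hM'TP, hM'close⟩ :=
    smooth_lemma (show k + 1 ≤ r by omega) C hCsym hCTN hgood (ε/2) (by positivity)
  refine ⟨M', hM'sym, hM'TN, hM'TP, ?_⟩
  intro i j
  have h1 := hM'close i j
  have h2 : |C i j - M i j| ≤ δ := by
    have : C i j - M i j = Matrix.single p p δ i j := by
      rw [hCdef]; simp [Matrix.add_apply]
    rw [this]
    by_cases h : p = i ∧ p = j
    · have hij : i = j := by rw [← h.1, ← h.2]
      simp [Matrix.single, h, hij, abs_of_pos hδ]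
    · simp [Matrix.single, h]
      positivity
  calc |M' i j - M i j| = |(M' i j - C i j) + (C i j - M i j)| := by ring_nf
    _ ≤ |M' i j - C i j| + |C i j - M i j| := abs_add_le _ _
    _ < ε/2 + δ := by
        apply add_lt_add_of_lt_of_le h1 h2
    _ = ε := by rw [hδdef]; ring


/-- The symmetric TP_r matrices are dense in the symmetric TN_r matrices. -/
theorem symm_TPr_dense_in_symm_TNr {n : ℕ} (hn : 1 ≤ n)
    (r : ℕ) (hr1 : 1 ≤ r) (hr : r ≤ n)
    (A : Matrix (Fin n) (Fin n) ℝ) (hsym : A.IsSymm) (hA : IsTNr A r)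
    (ε : ℝ) (hε : 0 < ε) :
    ∃ B : Matrix (Fin n) (Fin n) ℝ, B.IsSymm ∧ IsTPr B r ∧ ∀ i j, |A i j - B i j| < ε := by
  have key : ∀ k : ℕ, k ≤ r → ∀ ε' : ℝ, 0 < ε' →
      ∃ M : Matrix (Fin n) (Fin n) ℝ, M.IsSymm ∧ IsTNr M r ∧ IsTPr M k ∧
        ∀ i j, |A i j - M i j| < ε' := by
    intro k
    induction k with
    | zero =>
      intro _ ε' hε'
      refine ⟨A, hsym, hA, ?_, ?_⟩
      · intro k hk f g hf hg
        obtain rfl := Nat.le_zero.mp hk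
        rw [Matrix.det_fin_zero]
        exact one_pos
      · intro i j
        simpa using hε'
    | succ k ih =>
      intro hk ε' hε'
      obtain ⟨M, hMsym, hMTN, hMTP, hMclose⟩ := ih (by omega) (ε'/2) (by positivity)
      obtain ⟨M', hM'sym, hM'TN, hM'TP, hM'close⟩ :=
        step_lemma hn hr (show k < r by omega) M hMsym hMTN hMTP (ε'/2) (by positivity)
      refine ⟨M', hM'sym, hM'TN, hM'TP, ?_⟩
      intro i j
      calc |A i j - M' i j| = |(A i j - M i j) - (M' i j - M i j)| := by ring_nf
        _ ≤ |A i j - M i j| + |M' i j - M i j| := abs_sub _ _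
        _ < ε'/2 + ε'/2 := add_lt_add (hMclose i j) (hM'close i j)
        _ = ε' := by ring
  obtain ⟨B, hBsym, hBTN, hBTP, hBclose⟩ := key r le_rfl ε hε
  exact ⟨B, hBsym, hBTP, hBclose⟩
end

section
/- Let A and B be m-by-n real matrices. (a) If A and B are both TN_2, then the Hadamard product A ∘ B is TN_2. (b) If A is TP_2 and B is TP_1 and TN_2, then A ∘ B is TP_2. -/
lemma sm_one {α : Type*} [Preorder α] (x : α) : StrictMono (fun _ : Fin 1 => x) :=
  fun a b h => absurd (Subsingleton.elim a b) h.ne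

lemma sm_two {N : ℕ} {i i' : Fin N} (h : i < i') : StrictMono ![i, i'] := by
  intro a b hab
  fin_cases a <;> fin_cases b <;> simp_all

lemma TN_entry {m n : ℕ} {A : Matrix (Fin m) (Fin n) ℝ} (hA : IsTNr A 2)
    (i : Fin m) (j : Fin n) : 0 ≤ A i j := by
  simpa [Matrix.det_fin_one] using
    hA 1 (by norm_num) (fun _ => i) (fun _ => j) (sm_one i) (sm_one j)

lemma TP_entry {m n : ℕ} {A : Matrix (Fin m) (Fin n) ℝ} (hA : IsTPr A 1)
    (i : Fin m) (j : Fin n) : 0 < A i j := by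
  simpa [Matrix.det_fin_one] using
    hA 1 (by norm_num) (fun _ => i) (fun _ => j) (sm_one i) (sm_one j)

/-- Lemma 4.1. (a) The Hadamard product of two TN_2 matrices is TN_2.
(b) The Hadamard product of a TP_2 matrix with a TP_1 ∩ TN_2 matrix is TP_2. -/
theorem hadamard_product_TN2_TP2 {m n : ℕ} (A B : Matrix (Fin m) (Fin n) ℝ) :
    (IsTNr A 2 → IsTNr B 2 → IsTNr (Matrix.hadamard A B) 2) ∧
    (IsTPr A 2 → IsTPr B 1 → IsTNr B 2 → IsTPr (Matrix.hadamard A B) 2) := by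
  constructor
  · intro hA hB k hk f g hf hg
    interval_cases k
    · simp [Matrix.det_fin_zero]
    · rw [Matrix.det_fin_one]
      exact mul_nonneg (TN_entry hA _ _) (TN_entry hB _ _)
    · have hAm := hA 2 le_rfl f g hf hg
      have hBm := hB 2 le_rfl f g hf hg
      rw [Matrix.det_fin_two] at hAm hBm ⊢
      simp only [Matrix.submatrix_apply, Matrix.hadamard_apply] at hAm hBm ⊢
      nlinarith [TN_entry hA (f 0) (g 0), TN_entry hA (f 1) (g 1),
        TN_entry hA (f 0) (g 1), TN_entry hA (f 1) (g 0),
        TN_entry hB (f 0) (g 0), TN_entry hB (f 1) (g 1),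
        TN_entry hB (f 0) (g 1), TN_entry hB (f 1) (g 0),
        mul_nonneg hAm (mul_nonneg (TN_entry hB (f 0) (g 1)) (TN_entry hB (f 1) (g 0))),
        mul_nonneg (mul_nonneg (TN_entry hA (f 0) (g 0)) (TN_entry hA (f 1) (g 1))) hBm]
  · intro hA hB1 hB2 k hk f g hf hg
    interval_cases k
    · simp [Matrix.det_fin_zero]
    · rw [Matrix.det_fin_one]
      exact mul_pos (TP_entry (fun k hk => hA k (hk.trans one_le_two)) _ _) (TP_entry hB1 _ _)
    · have hAm := hA 2 le_rfl f g hf hg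
      have hBm := hB2 2 le_rfl f g hf hg
      rw [Matrix.det_fin_two] at hAm hBm ⊢
      simp only [Matrix.submatrix_apply, Matrix.hadamard_apply] at hAm hBm ⊢
      have hA1 : IsTPr A 1 := fun k hk => hA k (hk.trans one_le_two)
      nlinarith [TP_entry hA1 (f 0) (g 0), TP_entry hA1 (f 1) (g 1),
        TP_entry hA1 (f 0) (g 1), TP_entry hA1 (f 1) (g 0),
        TP_entry hB1 (f 0) (g 0), TP_entry hB1 (f 1) (g 1),
        TP_entry hB1 (f 0) (g 1), TP_entry hB1 (f 1) (g 0),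
        mul_pos hAm (mul_pos (TP_entry hB1 (f 0) (g 1)) (TP_entry hB1 (f 1) (g 0))),
        mul_nonneg (le_of_lt (mul_pos (TP_entry hA1 (f 0) (g 0)) (TP_entry hA1 (f 1) (g 1)))) hBm]
end
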